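/- arXiv:2001.09609 — 8 statements merged into one kernel-verified Lean document; each statement's English description precedes it below -/
import Mathlib

section
/- Let G be a σ-compact locally compact group with Haar measure μ_G, and fix a symmetric open relatively compact unit neighborhood Q. Let Φ, Ψ : G → [0,∞) be continuous and let Λ be a relatively separated family in G. Then for all x, y ∈ G: Σ_{λ∈Λ} Φ(λ⁻¹x) Ψ(y⁻¹λ) ≤ (Rel(Λ)/μ_G(Q)) · (M_Q Ψ ∗ M_Q^R Φ)(y⁻¹x), where M_Q Ψ(z) = sup_{u∈zQ} Ψ(u), M_Q^R Φ(z) = sup_{u∈Qz} Φ(u), and ∗ denotes convolution on G. -/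
open MeasureTheory Measure
open scoped Pointwise ENNReal

/-- Equation (2.2) of Lemma 2.4: for continuous `Φ, Ψ : G → [0,∞)` and a relatively
separated family `Λ`, the sum `Σ_λ Φ(λ⁻¹x) Ψ(y⁻¹λ)` is dominated by
`(Rel(Λ)/μ(Q)) · (M_Q Ψ ∗ M_Q^R Φ)(y⁻¹x)`. -/
theorem sum_envelope_le_convolution_maximal
    {G : Type*} [Group G] [TopologicalSpace G] [IsTopologicalGroup G]
    [LocallyCompactSpace G] [SigmaCompactSpace G]
    [MeasurableSpace G] [BorelSpace G]
    (μ : Measure G) [μ.IsHaarMeasure]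
    -- fixed symmetric open relatively compact unit neighborhood Q
    (Q : Set G) (hQopen : IsOpen Q) (hQone : (1 : G) ∈ Q) (hQsymm : Q⁻¹ = Q)
    (hQcomp : IsCompact (closure Q))
    -- continuous nonnegative (finite-valued) envelopes
    (Φ Ψ : G → ℝ≥0∞) (hΦc : Continuous Φ) (hΨc : Continuous Ψ)
    (hΦfin : ∀ x, Φ x ≠ ∞) (hΨfin : ∀ x, Ψ x ≠ ∞)
    -- a relatively separated family with Rel(Λ) ≤ N
    {ι : Type*} (Λ : ι → G) (N : ℕ)
    (hsep : ∀ x : G, {i : ι | Λ i ∈ x • Q}.Finite ∧ {i : ι | Λ i ∈ x • Q}.ncard ≤ N)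
    (x y : G) :
    ∑' i : ι, Φ ((Λ i)⁻¹ * x) * Ψ (y⁻¹ * Λ i)
      ≤ ((N : ℝ≥0∞) / μ Q) *
          ∫⁻ t, (⨆ q ∈ Q, Ψ (t * q)) * (⨆ q ∈ Q, Φ (q * (t⁻¹ * (y⁻¹ * x)))) ∂μ := by
  set F : G → ℝ≥0∞ := fun t => (⨆ q ∈ Q, Ψ (t * q)) * (⨆ q ∈ Q, Φ (q * (t⁻¹ * (y⁻¹ * x)))) with hF
  have hμQ0 : μ Q ≠ 0 := (hQopen.measure_pos μ ⟨1, hQone⟩).ne'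
  have hμQtop : μ Q ≠ ∞ :=
    (lt_of_le_of_lt (measure_mono subset_closure) hQcomp.measure_lt_top).ne
  -- measurability of F
  have hM1 : Measurable fun t : G => ⨆ q ∈ Q, Ψ (t * q) := by
    refine LowerSemicontinuous.measurable ?_
    refine lowerSemicontinuous_iSup fun q => lowerSemicontinuous_iSup fun hq => ?_
    exact (hΨc.comp (continuous_mul_right q)).lowerSemicontinuous
  have hM2 : Measurable fun t : G => ⨆ q ∈ Q, Φ (q * (t⁻¹ * (y⁻¹ * x))) := by
    refine LowerSemicontinuous.measurable ?_
    refine lowerSemicontinuous_iSup fun q => lowerSemicontinuous_iSup fun hq => ?_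
    exact (hΦc.comp (by continuity)).lowerSemicontinuous
  have hFm : Measurable F := hM1.mul hM2
  -- the translated tiles
  set S : ι → Set G := fun i => (y⁻¹ * Λ i) • Q with hS
  have hSmeas : ∀ i, MeasurableSet (S i) := fun i => (hQopen.smul _).measurableSet
  have hSμ : ∀ i, μ (S i) = μ Q := fun i =>
    MeasureTheory.measure_smul (μ := μ) (y⁻¹ * Λ i) Q
  -- pointwise bound on each tile
  have key : ∀ i, ∀ t ∈ S i, Φ ((Λ i)⁻¹ * x) * Ψ (y⁻¹ * Λ i) ≤ F t := by
    intro i t ht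
    obtain ⟨q, hq, hqt⟩ := ht
    have ht' : t = (y⁻¹ * Λ i) * q := hqt.symm
    have hq' : q⁻¹ ∈ Q := by rw [← hQsymm]; exact Set.inv_mem_inv.mpr hq
    have h1 : Ψ (y⁻¹ * Λ i) ≤ ⨆ q ∈ Q, Ψ (t * q) := by
      have : y⁻¹ * Λ i = t * q⁻¹ := by rw [ht']; group
      rw [this]
      exact le_iSup₂ (f := fun q _ => Ψ (t * q)) q⁻¹ hq'
    have h2 : Φ ((Λ i)⁻¹ * x) ≤ ⨆ q ∈ Q, Φ (q * (t⁻¹ * (y⁻¹ * x))) := by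
      have : (Λ i)⁻¹ * x = q * (t⁻¹ * (y⁻¹ * x)) := by rw [ht']; group
      rw [this]
      exact le_iSup₂ (f := fun q _ => Φ (q * (t⁻¹ * (y⁻¹ * x)))) q hq
    rw [mul_comm]
    exact mul_le_mul' h1 h2
  -- integral bound on each tile
  have tile : ∀ i, Φ ((Λ i)⁻¹ * x) * Ψ (y⁻¹ * Λ i) * μ Q ≤ ∫⁻ t, (S i).indicator F t ∂μ := by
    intro i
    rw [lintegral_indicator (hSmeas i)]
    calc Φ ((Λ i)⁻¹ * x) * Ψ (y⁻¹ * Λ i) * μ Q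
        = ∫⁻ _ in S i, Φ ((Λ i)⁻¹ * x) * Ψ (y⁻¹ * Λ i) ∂μ := by
          rw [setLIntegral_const, hSμ i]
      _ ≤ ∫⁻ t in S i, F t ∂μ := setLIntegral_mono hFm (key i)
  -- membership characterization
  have hmem : ∀ t, ∀ i, t ∈ S i ↔ Λ i ∈ (y * t) • Q := by
    intro t i
    rw [hS]
    simp only [Set.mem_smul_set_iff_inv_smul_mem]
    constructor
    · intro h
      have he : (y * t)⁻¹ • Λ i = ((y⁻¹ * Λ i)⁻¹ • t)⁻¹ := by
        simp only [smul_eq_mul]; group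
      rw [he, ← hQsymm]
      exact Set.inv_mem_inv.mpr h
    · intro h
      have he : (y⁻¹ * Λ i)⁻¹ • t = ((y * t)⁻¹ • Λ i)⁻¹ := by
        simp only [smul_eq_mul]; group
      rw [he, ← hQsymm]
      exact Set.inv_mem_inv.mpr h
  -- finite counting bound
  have count : ∀ (s : Finset ι) (t : G), ∑ i ∈ s, (S i).indicator F t ≤ (N : ℝ≥0∞) * F t := by
    intro s t
    obtain ⟨hfin, hcard⟩ := hsep (y * t)
    classical
    have hsubset : s.filter (fun i => t ∈ S i) ⊆ hfin.toFinset := by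
      intro i hi
      rw [Set.Finite.mem_toFinset]
      exact (hmem t i).mp (Finset.mem_filter.mp hi).2
    have hcard' : (s.filter (fun i => t ∈ S i)).card ≤ N := by
      refine le_trans (Finset.card_le_card hsubset) ?_
      rw [← Set.ncard_eq_toFinset_card _ hfin]
      exact hcard
    calc ∑ i ∈ s, (S i).indicator F t
        = ∑ i ∈ s.filter (fun i => t ∈ S i), F t := by
          rw [Finset.sum_filter]
          exact Finset.sum_congr rfl fun i _ => Set.indicator_apply _ _ _
      _ = (s.filter (fun i => t ∈ S i)).card • F t := Finset.sum_const _
      _ ≤ (N : ℝ≥0∞) * F t := by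
          rw [nsmul_eq_mul]
          exact mul_le_mul' (by exact_mod_cast hcard') le_rfl
  -- put things together: bound every finite subsum
  refine Summable.tsum_le_of_sum_le ENNReal.summable fun s => ?_
  have step1 : ∀ i, Φ ((Λ i)⁻¹ * x) * Ψ (y⁻¹ * Λ i)
      ≤ (∫⁻ t, (S i).indicator F t ∂μ) / μ Q := fun i =>
    (ENNReal.le_div_iff_mul_le (Or.inl hμQ0) (Or.inl hμQtop)).mpr (tile i)
  calc ∑ i ∈ s, Φ ((Λ i)⁻¹ * x) * Ψ (y⁻¹ * Λ i)
      ≤ ∑ i ∈ s, (∫⁻ t, (S i).indicator F t ∂μ) / μ Q :=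
        Finset.sum_le_sum fun i _ => step1 i
    _ = (∑ i ∈ s, ∫⁻ t, (S i).indicator F t ∂μ) / μ Q := by
        simp only [div_eq_mul_inv, Finset.sum_mul]
    _ = (∫⁻ t, ∑ i ∈ s, (S i).indicator F t ∂μ) / μ Q := by
        rw [lintegral_finset_sum _ fun i _ => hFm.indicator (hSmeas i)]
    _ ≤ ((N : ℝ≥0∞) * ∫⁻ t, F t ∂μ) / μ Q := by
        gcongr
        rw [← lintegral_const_mul _ hFm]
        exact lintegral_mono fun t => count s t
    _ = ((N : ℝ≥0∞) / μ Q) * ∫⁻ t, F t ∂μ := by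
        rw [ENNReal.mul_div_right_comm]
end

section
/- Let G be a σ-compact locally compact group with Haar measure μ_G and fixed symmetric open relatively compact unit neighborhood Q. Let Ψ : G → [0,∞) be continuous and Λ a relatively separated family in G. Then for every y ∈ G: Σ_{λ∈Λ} Ψ(y⁻¹λ) ≤ (Rel(Λ)/μ_G(Q)) · ∫_G M_Q Ψ(z) dμ_G(z). -/
open MeasureTheory Measure
open scoped Pointwise ENNReal

/-- Equation (2.3) of Lemma 2.4: for a continuous `Ψ : G → [0,∞)` and a relatively
separated family `Λ`, `Σ_λ Ψ(y⁻¹λ) ≤ (Rel(Λ)/μ(Q)) · ‖M_Q Ψ‖_{L¹}` for every `y`. -/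
theorem sum_envelope_le_amalgam_norm
    {G : Type*} [Group G] [TopologicalSpace G] [IsTopologicalGroup G]
    [LocallyCompactSpace G] [SigmaCompactSpace G]
    [MeasurableSpace G] [BorelSpace G]
    (μ : Measure G) [μ.IsHaarMeasure]
    -- fixed symmetric open relatively compact unit neighborhood Q
    (Q : Set G) (hQopen : IsOpen Q) (hQone : (1 : G) ∈ Q) (hQsymm : Q⁻¹ = Q)
    (hQcomp : IsCompact (closure Q))
    -- continuous nonnegative (finite-valued) envelope
    (Ψ : G → ℝ≥0∞) (hΨc : Continuous Ψ) (hΨfin : ∀ x, Ψ x ≠ ∞)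
    -- a relatively separated family with Rel(Λ) ≤ N
    {ι : Type*} (Λ : ι → G) (N : ℕ)
    (hsep : ∀ x : G, {i : ι | Λ i ∈ x • Q}.Finite ∧ {i : ι | Λ i ∈ x • Q}.ncard ≤ N)
    (y : G) :
    ∑' i : ι, Ψ (y⁻¹ * Λ i)
      ≤ ((N : ℝ≥0∞) / μ Q) * ∫⁻ z, ⨆ q ∈ Q, Ψ (z * q) ∂μ := by
  set MΨ : G → ℝ≥0∞ := fun z => ⨆ q ∈ Q, Ψ (z * q) with hMΨ
  have hμQ0 : μ Q ≠ 0 := (hQopen.measure_pos μ ⟨1, hQone⟩).ne'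
  have hμQtop : μ Q ≠ ∞ :=
    ((measure_mono subset_closure).trans_lt hQcomp.measure_lt_top).ne
  set S : ι → Set G := fun i => (y⁻¹ * Λ i) • Q with hS
  have hSmeas : ∀ i, MeasurableSet (S i) := fun i => (hQopen.smul _).measurableSet
  have hSmu : ∀ i, μ (S i) = μ Q := fun i => measure_smul μ (y⁻¹ * Λ i) Q
  have hpt : ∀ i z, z ∈ S i → Ψ (y⁻¹ * Λ i) ≤ MΨ z := by
    intro i z hz
    obtain ⟨q, hq, rfl⟩ := hz
    have hq' : q⁻¹ ∈ Q := by rw [← hQsymm]; exact Set.inv_mem_inv.mpr hq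
    have h1 : Ψ (y⁻¹ * Λ i) = Ψ (((y⁻¹ * Λ i) • q) * q⁻¹) := by
      simp [smul_eq_mul, mul_assoc]
    rw [h1]
    exact le_biSup (fun q' => Ψ (((y⁻¹ * Λ i) • q) * q')) hq'
  have hiff : ∀ z i, z ∈ S i ↔ Λ i ∈ (y * z) • Q := by
    intro z i
    rw [hS]
    simp only [Set.mem_smul_set_iff_inv_smul_mem, smul_eq_mul, mul_inv_rev, inv_inv]
    constructor
    · intro h
      have : ((Λ i)⁻¹ * y * z)⁻¹ ∈ Q := by rw [← hQsymm]; exact Set.inv_mem_inv.mpr h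
      simpa [mul_assoc] using this
    · intro h
      have : (z⁻¹ * y⁻¹ * Λ i)⁻¹ ∈ Q := by
        rw [← hQsymm]
        exact Set.inv_mem_inv.mpr (by simpa [mul_assoc] using h)
      simpa [mul_assoc] using this
  have key : ∀ z, ∑' i, (S i).indicator (fun _ => Ψ (y⁻¹ * Λ i)) z ≤ (N : ℝ≥0∞) * MΨ z := by
    intro z
    obtain ⟨hfin, hcard⟩ := hsep (y * z)
    have hfin' : {i : ι | z ∈ S i}.Finite := by
      refine hfin.subset ?_
      intro i hi
      exact (hiff z i).mp hi
    calc ∑' i, (S i).indicator (fun _ => Ψ (y⁻¹ * Λ i)) z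
        ≤ ∑' i, (S i).indicator (fun _ => MΨ z) z := by
          refine ENNReal.tsum_le_tsum fun i => ?_
          by_cases h : z ∈ S i
          · simpa [Set.indicator_of_mem h] using hpt i z h
          · simp [Set.indicator_of_notMem h]
      _ = ∑ i ∈ hfin'.toFinset, MΨ z := by
          rw [tsum_eq_sum (s := hfin'.toFinset)]
          · refine Finset.sum_congr rfl fun i hi => ?_
            exact Set.indicator_of_mem (show z ∈ S i from hfin'.mem_toFinset.mp hi) _
          · intro i hi
            exact Set.indicator_of_notMem
              (show z ∉ S i from fun h => hi (hfin'.mem_toFinset.mpr h)) _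
      _ = hfin'.toFinset.card • MΨ z := by rw [Finset.sum_const]
      _ ≤ (N : ℝ≥0∞) * MΨ z := by
          rw [nsmul_eq_mul]
          refine mul_le_mul_left ?_ _
          have h1 : {i : ι | z ∈ S i}.ncard ≤ {i : ι | Λ i ∈ (y * z) • Q}.ncard :=
            Set.ncard_le_ncard (fun i hi => (hiff z i).mp hi) hfin
          have hsub : hfin'.toFinset.card ≤ N := by
            rw [← Set.ncard_eq_toFinset_card _ hfin']
            exact h1.trans hcard
          exact_mod_cast hsub
  have main : ∑' i, Ψ (y⁻¹ * Λ i) * μ Q ≤ (N : ℝ≥0∞) * ∫⁻ z, MΨ z ∂μ := by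
    refine Summable.tsum_le_of_sum_le ENNReal.summable fun s => ?_
    calc ∑ i ∈ s, Ψ (y⁻¹ * Λ i) * μ Q
        = ∑ i ∈ s, ∫⁻ z, (S i).indicator (fun _ => Ψ (y⁻¹ * Λ i)) z ∂μ := by
          refine Finset.sum_congr rfl fun i _ => ?_
          rw [lintegral_indicator_const (hSmeas i), hSmu i]
      _ = ∫⁻ z, ∑ i ∈ s, (S i).indicator (fun _ => Ψ (y⁻¹ * Λ i)) z ∂μ :=
          (lintegral_finset_sum s fun i _ =>
            measurable_const.indicator (hSmeas i)).symm
      _ ≤ ∫⁻ z, (N : ℝ≥0∞) * MΨ z ∂μ :=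
          lintegral_mono fun z => (ENNReal.sum_le_tsum s).trans (key z)
      _ = (N : ℝ≥0∞) * ∫⁻ z, MΨ z ∂μ := lintegral_const_mul' _ _ (by simp)
  have hrw : ((N : ℝ≥0∞) / μ Q) * ∫⁻ z, MΨ z ∂μ
      = ((N : ℝ≥0∞) * ∫⁻ z, MΨ z ∂μ) / μ Q := by
    rw [div_eq_mul_inv, div_eq_mul_inv, mul_assoc, mul_comm (μ Q)⁻¹, ← mul_assoc]
  rw [hrw, ENNReal.le_div_iff_mul_le (Or.inl hμQ0) (Or.inl hμQtop),
    ← ENNReal.tsum_mul_right]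
  exact main
end

section
/- Let G be a σ-compact locally compact group with Haar measure μ_G, Q a symmetric open relatively compact unit neighborhood, Λ a relatively separated family in G, and Θ ∈ L¹(G) continuous with M_Q(Θ^∨) ∈ L¹(G), where Θ^∨(x) = Θ(x⁻¹). Then the synthesis operator D : ℓ²(Λ) → L²(G), (c_λ) ↦ Σ_{λ∈Λ} c_λ L_λΘ (where L_λΘ(x) = Θ(λ⁻¹x)) is well-defined and bounded, with ‖D‖² ≤ (Rel(Λ)/μ_G(Q)) · ‖Θ‖_{L¹} · ‖M_Q(Θ^∨)‖_{L¹}, and the defining series converges absolutely μ_G-almost everywhere. -/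
open MeasureTheory Measure
open scoped Pointwise ENNReal NNReal

/-- Cauchy–Schwarz for `ℝ≥0∞`-valued tsums. -/
private lemma ennreal_cauchy_schwarz {ι : Type*} (a b : ι → ℝ≥0∞) :
    (∑' i, a i * b i) ^ 2 ≤ (∑' i, a i ^ 2) * (∑' i, b i ^ 2) := by
  have h2 : Real.HolderConjugate 2 2 := Real.HolderConjugate.two_two
  have hfin : ∀ s : Finset ι,
      (∑ i ∈ s, a i * b i) ^ 2 ≤ (∑' i, a i ^ 2) * (∑' i, b i ^ 2) := by
    intro s
    have h := ENNReal.inner_le_Lp_mul_Lq s a b h2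
    have h' : (∑ i ∈ s, a i * b i) ^ 2 ≤
        ((∑ i ∈ s, a i ^ (2 : ℝ)) ^ (1 / (2 : ℝ)) *
          (∑ i ∈ s, b i ^ (2 : ℝ)) ^ (1 / (2 : ℝ))) ^ 2 :=
      pow_le_pow_left' h 2
    have hsq : ∀ t : ℝ≥0∞, (t ^ (1 / (2 : ℝ))) ^ 2 = t := by
      intro t
      rw [← ENNReal.rpow_natCast (t ^ (1 / (2 : ℝ))) 2, ← ENNReal.rpow_mul]
      norm_num
    calc (∑ i ∈ s, a i * b i) ^ 2
        ≤ ((∑ i ∈ s, a i ^ (2 : ℝ)) ^ (1 / (2 : ℝ)) *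
          (∑ i ∈ s, b i ^ (2 : ℝ)) ^ (1 / (2 : ℝ))) ^ 2 := h'
      _ = (∑ i ∈ s, a i ^ (2 : ℝ)) * (∑ i ∈ s, b i ^ (2 : ℝ)) := by
          rw [mul_pow, hsq, hsq]
      _ = (∑ i ∈ s, a i ^ 2) * (∑ i ∈ s, b i ^ 2) := by
          simp_rw [ENNReal.rpow_two]
      _ ≤ (∑' i, a i ^ 2) * (∑' i, b i ^ 2) :=
          mul_le_mul' (ENNReal.sum_le_tsum s) (ENNReal.sum_le_tsum s)
  have key : (∑' i, a i * b i) ≤ ((∑' i, a i ^ 2) * (∑' i, b i ^ 2)) ^ (1 / (2 : ℝ)) := by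
    rw [ENNReal.tsum_eq_iSup_sum]
    refine iSup_le fun s => ?_
    have := hfin s
    have h1 : ((∑ i ∈ s, a i * b i) ^ 2) ^ (1 / (2 : ℝ))
        ≤ ((∑' i, a i ^ 2) * (∑' i, b i ^ 2)) ^ (1 / (2 : ℝ)) :=
      ENNReal.rpow_le_rpow this (by norm_num)
    calc (∑ i ∈ s, a i * b i)
        = ((∑ i ∈ s, a i * b i) ^ 2) ^ (1 / (2 : ℝ)) := by
          rw [← ENNReal.rpow_natCast _ 2, ← ENNReal.rpow_mul]; norm_num
      _ ≤ _ := h1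
  calc (∑' i, a i * b i) ^ 2
      ≤ (((∑' i, a i ^ 2) * (∑' i, b i ^ 2)) ^ (1 / (2 : ℝ))) ^ 2 :=
        pow_le_pow_left' key 2
    _ = (∑' i, a i ^ 2) * (∑' i, b i ^ 2) := by
        rw [← ENNReal.rpow_natCast _ 2, ← ENNReal.rpow_mul]; norm_num

/-- Boundedness of the synthesis operator `D : ℓ²(Λ) → L²(G)`,
`(c_λ) ↦ Σ_λ c_λ L_λ Θ`, for a continuous `Θ ∈ L¹(G)` with `M_Q(Θ^∨) ∈ L¹(G)`:
the defining series converges absolutely a.e., and the squared `L²`-norm of the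
output is at most `(Rel(Λ)/μ(Q)) ‖Θ‖_{L¹} ‖M_Q(Θ^∨)‖_{L¹}` times `‖c‖²_{ℓ²}`. -/
theorem synthesis_operator_bounded
    {G : Type*} [Group G] [TopologicalSpace G] [IsTopologicalGroup G]
    [LocallyCompactSpace G] [SigmaCompactSpace G]
    [MeasurableSpace G] [BorelSpace G]
    (μ : Measure G) [μ.IsHaarMeasure]
    -- fixed symmetric open relatively compact unit neighborhood Q
    (Q : Set G) (hQopen : IsOpen Q) (hQone : (1 : G) ∈ Q) (hQsymm : Q⁻¹ = Q)
    (hQcomp : IsCompact (closure Q))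
    -- a relatively separated family with Rel(Λ) ≤ N
    {ι : Type*} (Λ : ι → G) (N : ℕ)
    (hsep : ∀ x : G, {i : ι | Λ i ∈ x • Q}.Finite ∧ {i : ι | Λ i ∈ x • Q}.ncard ≤ N)
    -- Θ continuous, Θ ∈ L¹ and M_Q(Θ^∨) ∈ L¹
    (Θ : G → ℝ) (hΘc : Continuous Θ) (hΘ1 : Integrable Θ μ)
    (hΘv : (∫⁻ x, ⨆ q ∈ Q, (‖Θ ((x * q)⁻¹)‖₊ : ℝ≥0∞) ∂μ) ≠ ∞)
    -- an ℓ² coefficient sequence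
    (c : ι → ℂ) (hc : Summable fun i => ‖c i‖ ^ 2) :
    (∀ᵐ x ∂μ, Summable fun i => ‖c i * (Θ ((Λ i)⁻¹ * x) : ℂ)‖) ∧
      (∫⁻ x, (‖∑' i : ι, c i * (Θ ((Λ i)⁻¹ * x) : ℂ)‖₊ : ℝ≥0∞) ^ 2 ∂μ)
        ≤ ((N : ℝ≥0∞) / μ Q) * (∫⁻ x, (‖Θ x‖₊ : ℝ≥0∞) ∂μ)
            * (∫⁻ x, ⨆ q ∈ Q, (‖Θ ((x * q)⁻¹)‖₊ : ℝ≥0∞) ∂μ)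
            * ∑' i : ι, (‖c i‖₊ : ℝ≥0∞) ^ 2 := by
  classical
  set MΘ : G → ℝ≥0∞ := fun y => ⨆ q ∈ Q, (‖Θ ((y * q)⁻¹)‖₊ : ℝ≥0∞) with hMΘdef
  set A : ℝ≥0∞ := ∫⁻ x, MΘ x ∂μ with hAdef
  set B : ℝ≥0∞ := ∫⁻ x, (‖Θ x‖₊ : ℝ≥0∞) ∂μ with hBdef
  set g : ι → G → ℝ≥0∞ := fun i x => (‖Θ ((Λ i)⁻¹ * x)‖₊ : ℝ≥0∞) with hgdef
  -- countability of ι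
  have hfinK : ∀ K : Set G, IsCompact K → {i : ι | Λ i ∈ K}.Finite := by
    intro K hK
    obtain ⟨t, _, ht⟩ := hK.elim_nhds_subcover (fun x => x • Q) fun x _ =>
      (hQopen.smul x).mem_nhds ⟨1, hQone, by simp [smul_eq_mul]⟩
    have hsub : {i : ι | Λ i ∈ K} ⊆ ⋃ x ∈ t, {i : ι | Λ i ∈ x • Q} := by
      intro i hi
      obtain ⟨x, hxt, hx⟩ := Set.mem_iUnion₂.1 (ht hi)
      exact Set.mem_iUnion₂.2 ⟨x, hxt, hx⟩
    exact (t.finite_toSet.biUnion fun x _ => (hsep x).1).subset hsub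
  haveI hcount : Countable ι := by
    rw [← Set.countable_univ_iff]
    have huniv : (Set.univ : Set ι) ⊆ ⋃ n, {i : ι | Λ i ∈ compactCovering G n} := by
      intro i _
      have : Λ i ∈ ⋃ n, compactCovering G n := by
        rw [iUnion_compactCovering]; trivial
      obtain ⟨n, hn⟩ := Set.mem_iUnion.1 this
      exact Set.mem_iUnion.2 ⟨n, hn⟩
    exact (Set.countable_iUnion fun n =>
      (hfinK _ (isCompact_compactCovering G n)).countable).mono huniv
  -- basic facts about μ Q
  have hQ0 : μ Q ≠ 0 := (hQopen.measure_pos μ ⟨1, hQone⟩).ne'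
  have hQtop : μ Q ≠ ∞ :=
    ((measure_mono subset_closure).trans_lt hQcomp.measure_lt_top).ne
  -- measurability
  have hMmeas : Measurable MΘ := by
    apply LowerSemicontinuous.measurable
    apply lowerSemicontinuous_biSup
    intro q _
    exact (ENNReal.continuous_coe.comp
      (continuous_nnnorm.comp (hΘc.comp
        ((continuous_id.mul continuous_const).inv)))).lowerSemicontinuous
  have hgmeas : ∀ i, Measurable (g i) := fun i =>
    (ENNReal.continuous_coe.comp
      (continuous_nnnorm.comp (hΘc.comp (continuous_const.mul continuous_id)))).measurable
  -- the key pointwise estimate: ∑' i, g i x ≤ N * A / μ Q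
  have key : ∀ x : G, (∑' i, g i x) ≤ (N : ℝ≥0∞) * A / μ Q := by
    intro x
    rw [ENNReal.le_div_iff_mul_le (Or.inl hQ0) (Or.inl hQtop)]
    have step1 : ∀ i, g i x * μ Q ≤ ∫⁻ y in (Λ i) • Q, MΘ (x⁻¹ * y) ∂μ := by
      intro i
      have hbound : ∀ y ∈ (Λ i) • Q, g i x ≤ MΘ (x⁻¹ * y) := by
        rintro y ⟨q, hq, rfl⟩
        have hq' : q⁻¹ ∈ Q := by rw [← hQsymm]; exact Set.inv_mem_inv.2 hq
        have harg : (x⁻¹ * (Λ i • q) * q⁻¹)⁻¹ = (Λ i)⁻¹ * x := by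
          simp only [smul_eq_mul]; group
        calc g i x = (‖Θ ((x⁻¹ * (Λ i • q) * q⁻¹)⁻¹)‖₊ : ℝ≥0∞) := by rw [harg]
          _ ≤ MΘ (x⁻¹ * (Λ i • q)) :=
              le_biSup (fun q' => (‖Θ ((x⁻¹ * (Λ i • q) * q')⁻¹)‖₊ : ℝ≥0∞)) hq'
      calc g i x * μ Q = g i x * μ ((Λ i) • Q) := by rw [measure_smul]
        _ = ∫⁻ _ in (Λ i) • Q, g i x ∂μ := (setLIntegral_const _ _).symm
        _ ≤ ∫⁻ y in (Λ i) • Q, MΘ (x⁻¹ * y) ∂μ :=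
            setLIntegral_mono (hMmeas.comp (measurable_const_mul x⁻¹)) hbound
    have step2 : ∀ y : G,
        (∑' i, ((Λ i) • Q).indicator (fun y => MΘ (x⁻¹ * y)) y) ≤ (N : ℝ≥0∞) * MΘ (x⁻¹ * y) := by
      intro y
      have hTfin := (hsep y).1
      have hTcard := (hsep y).2
      have hmem : ∀ i, y ∈ (Λ i) • Q ↔ Λ i ∈ y • Q := by
        intro i
        rw [Set.mem_smul_set_iff_inv_smul_mem, Set.mem_smul_set_iff_inv_smul_mem,
          smul_eq_mul, smul_eq_mul]
        constructor <;> intro h <;>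
          · rw [← hQsymm]
            simpa [mul_inv_rev] using Set.inv_mem_inv.2 h
      have heq : ∀ i, ((Λ i) • Q).indicator (fun y => MΘ (x⁻¹ * y)) y
          = {i : ι | Λ i ∈ y • Q}.indicator (fun _ => MΘ (x⁻¹ * y)) i := by
        intro i
        simp only [Set.indicator_apply, Set.mem_setOf_eq, hmem i]
      rw [tsum_congr heq]
      have hsupp : ∀ i ∉ hTfin.toFinset,
          {i : ι | Λ i ∈ y • Q}.indicator (fun _ => MΘ (x⁻¹ * y)) i = 0 := by
        intro i hi
        rw [Set.Finite.mem_toFinset] at hi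
        exact Set.indicator_of_notMem hi _
      rw [tsum_eq_sum hsupp]
      calc ∑ i ∈ hTfin.toFinset, {i : ι | Λ i ∈ y • Q}.indicator (fun _ => MΘ (x⁻¹ * y)) i
          ≤ ∑ _i ∈ hTfin.toFinset, MΘ (x⁻¹ * y) :=
            Finset.sum_le_sum fun i _ => Set.indicator_le_self _ _ i
        _ = (hTfin.toFinset.card : ℝ≥0∞) * MΘ (x⁻¹ * y) := by
            rw [Finset.sum_const, nsmul_eq_mul]
        _ ≤ (N : ℝ≥0∞) * MΘ (x⁻¹ * y) := by
            refine mul_le_mul_left ?_ _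
            exact_mod_cast (Set.ncard_eq_toFinset_card _ hTfin ▸ hTcard)
    calc (∑' i, g i x) * μ Q = ∑' i, g i x * μ Q := ENNReal.tsum_mul_right.symm
      _ ≤ ∑' i, ∫⁻ y in (Λ i) • Q, MΘ (x⁻¹ * y) ∂μ := ENNReal.tsum_le_tsum step1
      _ = ∑' i, ∫⁻ y, ((Λ i) • Q).indicator (fun y => MΘ (x⁻¹ * y)) y ∂μ := by
          exact tsum_congr fun i =>
            (lintegral_indicator (hQopen.smul (Λ i)).measurableSet _).symm
      _ = ∫⁻ y, ∑' i, ((Λ i) • Q).indicator (fun y => MΘ (x⁻¹ * y)) y ∂μ :=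
          (lintegral_tsum fun i =>
            ((hMmeas.comp (measurable_const_mul x⁻¹)).indicator
              (hQopen.smul (Λ i)).measurableSet).aemeasurable).symm
      _ ≤ ∫⁻ y, (N : ℝ≥0∞) * MΘ (x⁻¹ * y) ∂μ := lintegral_mono step2
      _ = (N : ℝ≥0∞) * ∫⁻ y, MΘ (x⁻¹ * y) ∂μ :=
          lintegral_const_mul _ (hMmeas.comp (measurable_const_mul x⁻¹))
      _ = (N : ℝ≥0∞) * A := by rw [lintegral_mul_left_eq_self MΘ x⁻¹]
  have hAne : A ≠ ∞ := hΘv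
  have hCne : (N : ℝ≥0∞) * A / μ Q ≠ ∞ :=
    (ENNReal.div_lt_top (ENNReal.mul_ne_top (ENNReal.natCast_ne_top N) hAne) hQ0).ne
  -- a uniform bound on the coefficients
  have hcbdd : ∀ i, ‖c i‖ ≤ Real.sqrt (∑' j, ‖c j‖ ^ 2) := by
    intro i
    have h1 : ‖c i‖ ^ 2 ≤ ∑' j, ‖c j‖ ^ 2 :=
      Summable.le_tsum hc i fun j _ => sq_nonneg _
    calc ‖c i‖ = Real.sqrt (‖c i‖ ^ 2) := (Real.sqrt_sq (norm_nonneg _)).symm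
      _ ≤ Real.sqrt (∑' j, ‖c j‖ ^ 2) := Real.sqrt_le_sqrt h1
  -- everywhere (hence a.e.) absolute summability
  have hsumm : ∀ x : G, Summable fun i => ‖c i * (Θ ((Λ i)⁻¹ * x) : ℂ)‖ := by
    intro x
    have hg_ne : (∑' i, g i x) ≠ ∞ := ((key x).trans_lt hCne.lt_top).ne
    have hgs : Summable fun i => ‖Θ ((Λ i)⁻¹ * x)‖₊ :=
      ENNReal.tsum_coe_ne_top_iff_summable.1 hg_ne
    have hgs' : Summable fun i => ‖Θ ((Λ i)⁻¹ * x)‖ := by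
      simpa [← coe_nnnorm] using NNReal.summable_coe.2 hgs
    refine Summable.of_nonneg_of_le (fun i => norm_nonneg _) (fun i => ?_)
      (hgs'.mul_left (Real.sqrt (∑' j, ‖c j‖ ^ 2)))
    rw [norm_mul, Complex.norm_real]
    exact mul_le_mul_of_nonneg_right (hcbdd i) (norm_nonneg _)
  refine ⟨Filter.Eventually.of_forall hsumm, ?_⟩
  -- pointwise estimate for the square
  have hsq : ∀ t : ℝ≥0∞, (t ^ (1 / (2 : ℝ))) ^ 2 = t := by
    intro t
    rw [← ENNReal.rpow_natCast (t ^ (1 / (2 : ℝ))) 2, ← ENNReal.rpow_mul]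
    norm_num
  have hpt : ∀ x : G, (‖∑' i : ι, c i * (Θ ((Λ i)⁻¹ * x) : ℂ)‖₊ : ℝ≥0∞) ^ 2
      ≤ ((N : ℝ≥0∞) * A / μ Q) * ∑' i, (‖c i‖₊ : ℝ≥0∞) ^ 2 * g i x := by
    intro x
    have hnn : Summable fun i => ‖c i * (Θ ((Λ i)⁻¹ * x) : ℂ)‖₊ := by
      rw [← NNReal.summable_coe]
      simpa [← coe_nnnorm] using hsumm x
    have h1 : (‖∑' i : ι, c i * (Θ ((Λ i)⁻¹ * x) : ℂ)‖₊ : ℝ≥0∞)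
        ≤ ∑' i, (‖c i‖₊ : ℝ≥0∞) * g i x := by
      calc (‖∑' i : ι, c i * (Θ ((Λ i)⁻¹ * x) : ℂ)‖₊ : ℝ≥0∞)
          ≤ ((∑' i, ‖c i * (Θ ((Λ i)⁻¹ * x) : ℂ)‖₊ : ℝ≥0) : ℝ≥0∞) :=
            ENNReal.coe_le_coe.2 (nnnorm_tsum_le hnn)
        _ = ∑' i, (‖c i * (Θ ((Λ i)⁻¹ * x) : ℂ)‖₊ : ℝ≥0∞) := ENNReal.coe_tsum hnn
        _ = ∑' i, (‖c i‖₊ : ℝ≥0∞) * g i x := by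
            refine tsum_congr fun i => ?_
            rw [nnnorm_mul, ENNReal.coe_mul, Complex.nnnorm_real]
    have h2 : (∑' i, (‖c i‖₊ : ℝ≥0∞) * g i x) ^ 2
        ≤ (∑' i, (‖c i‖₊ : ℝ≥0∞) ^ 2 * g i x) * (∑' i, g i x) := by
      have hcs := ennreal_cauchy_schwarz
        (fun i => (‖c i‖₊ : ℝ≥0∞) * (g i x) ^ (1 / (2 : ℝ)))
        (fun i => (g i x) ^ (1 / (2 : ℝ)))
      simp only [mul_pow, hsq] at hcs
      calc (∑' i, (‖c i‖₊ : ℝ≥0∞) * g i x) ^ 2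
          = (∑' i, ((‖c i‖₊ : ℝ≥0∞) * (g i x) ^ (1 / (2 : ℝ)))
              * (g i x) ^ (1 / (2 : ℝ))) ^ 2 := by
            congr 1
            refine tsum_congr fun i => ?_
            rw [mul_assoc, ← sq, hsq]
        _ ≤ (∑' i, (‖c i‖₊ : ℝ≥0∞) ^ 2 * g i x) * (∑' i, g i x) := hcs
    calc (‖∑' i : ι, c i * (Θ ((Λ i)⁻¹ * x) : ℂ)‖₊ : ℝ≥0∞) ^ 2
        ≤ (∑' i, (‖c i‖₊ : ℝ≥0∞) * g i x) ^ 2 := pow_le_pow_left' h1 2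
      _ ≤ (∑' i, (‖c i‖₊ : ℝ≥0∞) ^ 2 * g i x) * (∑' i, g i x) := h2
      _ ≤ (∑' i, (‖c i‖₊ : ℝ≥0∞) ^ 2 * g i x) * ((N : ℝ≥0∞) * A / μ Q) :=
          mul_le_mul_right (key x) _
      _ = ((N : ℝ≥0∞) * A / μ Q) * ∑' i, (‖c i‖₊ : ℝ≥0∞) ^ 2 * g i x := mul_comm _ _
  -- integrate
  have hBint : ∀ i : ι, (∫⁻ x, g i x ∂μ) = B := by
    intro i
    exact lintegral_mul_left_eq_self (fun x => (‖Θ x‖₊ : ℝ≥0∞)) (Λ i)⁻¹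
  calc (∫⁻ x, (‖∑' i : ι, c i * (Θ ((Λ i)⁻¹ * x) : ℂ)‖₊ : ℝ≥0∞) ^ 2 ∂μ)
      ≤ ∫⁻ x, ((N : ℝ≥0∞) * A / μ Q) * ∑' i, (‖c i‖₊ : ℝ≥0∞) ^ 2 * g i x ∂μ :=
        lintegral_mono hpt
    _ = ((N : ℝ≥0∞) * A / μ Q) * ∫⁻ x, ∑' i, (‖c i‖₊ : ℝ≥0∞) ^ 2 * g i x ∂μ :=
        lintegral_const_mul' _ _ hCne
    _ = ((N : ℝ≥0∞) * A / μ Q) * ∑' i, ∫⁻ x, (‖c i‖₊ : ℝ≥0∞) ^ 2 * g i x ∂μ := by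
        rw [lintegral_tsum fun i => ((hgmeas i).const_mul _).aemeasurable]
    _ = ((N : ℝ≥0∞) * A / μ Q) * ∑' i, (‖c i‖₊ : ℝ≥0∞) ^ 2 * B := by
        congr 1
        refine tsum_congr fun i => ?_
        rw [lintegral_const_mul _ (hgmeas i), hBint i]
    _ = ((N : ℝ≥0∞) * A / μ Q) * ((∑' i, (‖c i‖₊ : ℝ≥0∞) ^ 2) * B) := by
        rw [ENNReal.tsum_mul_right]
    _ = ((N : ℝ≥0∞) / μ Q) * B * A * ∑' i : ι, (‖c i‖₊ : ℝ≥0∞) ^ 2 := by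
        simp only [div_eq_mul_inv]
        ring
end

section
/- Let G be a σ-compact locally compact group with Haar measure μ_G and Q a symmetric open relatively compact unit neighborhood. There is a constant C > 0 (one may take C = 1/μ_G(P) for a symmetric open unit neighborhood P with PP ⊆ Q) such that every measurable f : G → ℂ satisfies ‖f‖_{L∞} ≤ C · ‖M_Q f‖_{L¹}, where M_Q f(x) = ess-sup_{y∈xQ} |f(y)|. -/
open MeasureTheory Measure
open scoped Pointwise ENNReal NNReal

/-- The embedding `W^L(G) ↪ L^∞(G)`: there is `C > 0` such that every measurable
`f : G → ℂ` satisfies `‖f‖_{L∞} ≤ C ‖M_Q f‖_{L¹}`, where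
`M_Q f (x) = ess-sup_{y ∈ xQ} |f y|`. -/
theorem amalgam_embeds_into_Linfty
    {G : Type*} [Group G] [TopologicalSpace G] [IsTopologicalGroup G]
    [LocallyCompactSpace G] [SigmaCompactSpace G]
    [MeasurableSpace G] [BorelSpace G]
    (μ : Measure G) [μ.IsHaarMeasure]
    -- fixed symmetric open relatively compact unit neighborhood Q
    (Q : Set G) (hQopen : IsOpen Q) (hQone : (1 : G) ∈ Q) (hQsymm : Q⁻¹ = Q)
    (hQcomp : IsCompact (closure Q)) :
    ∃ C : ℝ, 0 < C ∧ ∀ f : G → ℂ, Measurable f →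
      essSup (fun x => (‖f x‖₊ : ℝ≥0∞)) μ
        ≤ ENNReal.ofReal C *
            ∫⁻ x, essSup (fun y => (‖f y‖₊ : ℝ≥0∞)) (μ.restrict (x • Q)) ∂μ := by
  -- choose V open, 1 ∈ V, V * V ⊆ Q
  obtain ⟨V, V_open, V_one, hVV⟩ :=
    exists_open_nhds_one_mul_subset (hQopen.mem_nhds hQone)
  -- symmetrize
  set P : Set G := V ∩ V⁻¹ with hP
  have P_open : IsOpen P := V_open.inter (V_open.inv)
  have P_one : (1 : G) ∈ P := ⟨V_one, by simpa using V_one⟩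
  have hVQ : V ⊆ Q := fun v hv => by simpa using hVV (Set.mul_mem_mul hv V_one)
  have hPQ : P ⊆ Q := fun p hp => hVQ hp.1
  -- key inclusion: P⁻¹ * P ⊆ Q
  have hPinvP : ∀ p ∈ P, ∀ p' ∈ P, p⁻¹ * p' ∈ Q := by
    intro p hp p' hp'
    exact hVV (Set.mul_mem_mul hp.2 hp'.1)
  have hμP0 : μ P ≠ 0 := (P_open.measure_pos μ ⟨1, P_one⟩).ne'
  have hμPtop : μ P ≠ ∞ := by
    have : μ P ≤ μ (closure Q) :=
      measure_mono (hPQ.trans subset_closure)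
    exact (lt_of_le_of_lt this hQcomp.measure_lt_top).ne
  have htoReal : 0 < (μ P).toReal := ENNReal.toReal_pos hμP0 hμPtop
  refine ⟨((μ P).toReal)⁻¹, inv_pos.mpr htoReal, ?_⟩
  intro f hf
  have hC : ENNReal.ofReal ((μ P).toReal)⁻¹ = (μ P)⁻¹ := by
    rw [ENNReal.ofReal_inv_of_pos htoReal, ENNReal.ofReal_toReal hμPtop]
  rw [hC]
  set g : G → ℝ≥0∞ := fun x => essSup (fun y => (‖f y‖₊ : ℝ≥0∞)) (μ.restrict (x • Q))
    with hg
  set I : ℝ≥0∞ := ∫⁻ x, g x ∂μ with hI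
  set c : ℝ≥0∞ := (μ P)⁻¹ * I with hc
  -- key: for every x, essSup over x•P is ≤ c
  have key : ∀ x : G,
      essSup (fun y => (‖f y‖₊ : ℝ≥0∞)) (μ.restrict (x • P)) ≤ c := by
    intro x
    set A := essSup (fun y => (‖f y‖₊ : ℝ≥0∞)) (μ.restrict (x • P)) with hA
    -- for y ∈ x • P, x • P ⊆ y • Q, hence A ≤ g y
    have hsub : ∀ y ∈ x • P, x • P ⊆ y • Q := by
      rintro y ⟨p, hp, rfl⟩ z ⟨p', hp', rfl⟩
      exact ⟨p⁻¹ * p', hPinvP p hp p' hp', by simp [smul_eq_mul, mul_assoc]⟩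
    have hptwise : ∀ y ∈ x • P, A ≤ g y := by
      intro y hy
      exact essSup_mono_measure' (Measure.restrict_mono (hsub y hy) le_rfl)
    have hmeas : MeasurableSet (x • P) := (P_open.smul x).measurableSet
    have h1 : μ P * A ≤ I := by
      have h2 : (∫⁻ _ in x • P, A ∂μ) = A * μ (x • P) := setLIntegral_const _ _
      have h3 : (∫⁻ _ in x • P, A ∂μ) ≤ ∫⁻ y in x • P, g y ∂μ := by
        refine lintegral_mono_ae ?_
        filter_upwards [ae_restrict_mem hmeas] with y hy using hptwise y hy
      have h4 : (∫⁻ y in x • P, g y ∂μ) ≤ I := setLIntegral_le_lintegral _ _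
      calc μ P * A = A * μ (x • P) := by rw [measure_smul, mul_comm]
        _ = ∫⁻ _ in x • P, A ∂μ := h2.symm
        _ ≤ ∫⁻ y in x • P, g y ∂μ := h3
        _ ≤ I := h4
    calc A = (μ P)⁻¹ * (μ P * A) := by
            rw [← mul_assoc, ENNReal.inv_mul_cancel hμP0 hμPtop, one_mul]
      _ ≤ (μ P)⁻¹ * I := mul_le_mul_right h1 _
  -- countable cover of G by translates of P
  obtain ⟨r, hr_count, hr_cov⟩ :=
    isLindelof_univ.elim_countable_subcover (fun x : G => x • P)
      (fun x => P_open.smul x)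
      (fun y _ => Set.mem_iUnion.mpr ⟨y, ⟨1, P_one, mul_one y⟩⟩)
  -- the bad set is null
  have hae : ∀ᵐ y ∂μ, (‖f y‖₊ : ℝ≥0∞) ≤ c := by
    have hNmeas : MeasurableSet {y : G | ¬ (‖f y‖₊ : ℝ≥0∞) ≤ c} := by
      have : Measurable fun y : G => (‖f y‖₊ : ℝ≥0∞) := hf.nnnorm.coe_nnreal_ennreal
      exact (measurableSet_le this measurable_const).compl
    have hnull : ∀ x : G, μ ({y : G | ¬ (‖f y‖₊ : ℝ≥0∞) ≤ c} ∩ x • P) = 0 := by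
      intro x
      have h1 : ∀ᵐ y ∂μ.restrict (x • P), (‖f y‖₊ : ℝ≥0∞) ≤ c := by
        filter_upwards [ENNReal.ae_le_essSup (μ := μ.restrict (x • P))
          (fun y => (‖f y‖₊ : ℝ≥0∞))] with y hy using hy.trans (key x)
      have := ae_iff.mp h1
      rwa [Measure.restrict_apply hNmeas] at this
    have hcover : {y : G | ¬ (‖f y‖₊ : ℝ≥0∞) ≤ c}
        ⊆ ⋃ x ∈ r, {y : G | ¬ (‖f y‖₊ : ℝ≥0∞) ≤ c} ∩ x • P := by
      intro y hy
      obtain ⟨x, hx, hyx⟩ := Set.mem_iUnion₂.mp (hr_cov (Set.mem_univ y))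
      exact Set.mem_iUnion₂.mpr ⟨x, hx, hy, hyx⟩
    rw [ae_iff]
    exact measure_mono_null hcover
      ((measure_biUnion_null_iff hr_count).mpr fun x _ => hnull x)
  exact essSup_le_of_ae_le c hae
end

section
/- Let G be a σ-compact locally compact group with Haar measure μ_G, Q a symmetric open relatively compact unit neighborhood, and Λ, Γ relatively separated families in G. Suppose M = (M_{λ,γ})_{λ∈Λ,γ∈Γ} is a matrix admitting a continuous nonnegative envelope Θ with M_Q Θ ∈ L¹(G) and |M_{λ,γ}| ≤ min{Θ(γ⁻¹λ), Θ(λ⁻¹γ)} for all λ, γ. Then M satisfies the Schur conditions: sup_γ Σ_{λ∈Λ} |M_{λ,γ}| ≤ (Rel(Λ)/μ_G(Q)) ‖M_QΘ‖_{L¹} and sup_λ Σ_{γ∈Γ} |M_{λ,γ}| ≤ (Rel(Γ)/μ_G(Q)) ‖M_QΘ‖_{L¹}; consequently M defines a bounded operator ℓ^p(Γ) → ℓ^p(Λ) for every p ∈ [1,∞] with norm at most (max{Rel(Λ),Rel(Γ)}/μ_G(Q)) ‖M_QΘ‖_{L¹}. -/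
open MeasureTheory Measure
open scoped Pointwise ENNReal NNReal

lemma smul_mem_symm {G : Type*} [Group G] {Q : Set G} (hQsymm : Q⁻¹ = Q) {x y : G} :
    x ∈ y • Q ↔ y ∈ x • Q := by
  have : ∀ a b : G, a ∈ b • Q → b ∈ a • Q := by
    intro a b h
    rw [Set.mem_smul_set_iff_inv_smul_mem, smul_eq_mul] at h ⊢
    rw [← hQsymm, Set.mem_inv, mul_inv_rev, inv_inv]
    exact h
  exact ⟨this x y, this y x⟩

lemma envelope_le {G : Type*} [Group G] [TopologicalSpace G] [IsTopologicalGroup G]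
    {Q : Set G} (hQcomp : IsCompact (closure Q))
    {Θ : G → ℝ} (hΘc : Continuous Θ)
    {x z : G} (hz : z ∈ x • Q) : Θ z ≤ ⨆ q ∈ Q, Θ (x * q) := by
  obtain ⟨q, hq, rfl⟩ := hz
  have hbdd : BddAbove (Set.range fun q => ⨆ _ : q ∈ Q, Θ (x * q)) := by
    obtain ⟨C, hC⟩ := (hQcomp.image (hΘc.comp (continuous_mul_left x))).bddAbove
    refine ⟨max C 0, ?_⟩
    rintro v ⟨q', rfl⟩
    show (⨆ _ : q' ∈ Q, Θ (x * q')) ≤ max C 0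
    by_cases hq' : q' ∈ Q
    · rw [ciSup_pos hq']
      exact le_max_of_le_left (hC ⟨q', subset_closure hq', rfl⟩)
    · haveI : IsEmpty (q' ∈ Q) := ⟨hq'⟩
      rw [Real.iSup_of_isEmpty]
      exact le_max_right _ _
  refine le_ciSup_of_le hbdd q ?_
  rw [ciSup_pos hq]
  exact le_of_eq (congrArg Θ (by simp [smul_eq_mul]))

lemma key_count {G : Type*} [Group G] [TopologicalSpace G] [IsTopologicalGroup G]
    [MeasurableSpace G] [BorelSpace G]
    (μ : Measure G) [μ.IsHaarMeasure]
    (Q : Set G) (hQopen : IsOpen Q) (hQsymm : Q⁻¹ = Q)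
    (hQcomp : IsCompact (closure Q))
    (Θ : G → ℝ) (hΘc : Continuous Θ)
    (hmeas : AEMeasurable (fun x => ⨆ q ∈ Q, Θ (x * q)) μ)
    {ι : Type*} (y : ι → G) (N : ℕ)
    (hcount : ∀ x : G, {i : ι | y i ∈ x • Q}.Finite ∧ {i : ι | y i ∈ x • Q}.ncard ≤ N) :
    (∑' i, ENNReal.ofReal (Θ (y i))) * μ Q
      ≤ (N : ℝ≥0∞) * ∫⁻ x, ENNReal.ofReal (⨆ q ∈ Q, Θ (x * q)) ∂μ := by
  set F : G → ℝ≥0∞ := fun x => ENNReal.ofReal (⨆ q ∈ Q, Θ (x * q)) with hF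
  have hFmeas : AEMeasurable F μ := hmeas.ennreal_ofReal
  have hsetmeas : ∀ i, MeasurableSet (y i • Q) := fun i => (hQopen.smul (y i)).measurableSet
  have step1 : ∀ i, ENNReal.ofReal (Θ (y i)) * μ Q
      ≤ ∫⁻ x, (y i • Q).indicator F x ∂μ := by
    intro i
    rw [lintegral_indicator (hsetmeas i)]
    calc ENNReal.ofReal (Θ (y i)) * μ Q
        = ENNReal.ofReal (Θ (y i)) * μ (y i • Q) := by rw [measure_smul]
      _ = ∫⁻ _ in y i • Q, ENNReal.ofReal (Θ (y i)) ∂μ := by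
          rw [setLIntegral_const]
      _ ≤ ∫⁻ x in y i • Q, F x ∂μ := by
          refine setLIntegral_mono_ae (hFmeas.restrict) ?_
          filter_upwards with x hx
          exact ENNReal.ofReal_le_ofReal
            (envelope_le hQcomp hΘc ((smul_mem_symm hQsymm).1 hx))
  have step3 : ∀ x, (∑' i, (y i • Q).indicator F x) ≤ (N : ℝ≥0∞) * F x := by
    intro x
    have hfin := (hcount x).1
    have hcard := (hcount x).2
    have hz : ∀ i ∉ hfin.toFinset, (y i • Q).indicator F x = 0 := by
      intro i hi
      rw [Set.Finite.mem_toFinset] at hi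
      apply Set.indicator_of_notMem
      exact fun hx => hi ((smul_mem_symm hQsymm).1 hx)
    rw [tsum_eq_sum hz]
    calc ∑ i ∈ hfin.toFinset, (y i • Q).indicator F x
        ≤ ∑ _i ∈ hfin.toFinset, F x :=
          Finset.sum_le_sum fun i _ => Set.indicator_apply_le fun _ => le_rfl
      _ = (hfin.toFinset.card : ℝ≥0∞) * F x := by
          rw [Finset.sum_const, nsmul_eq_mul]
      _ ≤ (N : ℝ≥0∞) * F x := by
          gcongr
          exact_mod_cast (Set.ncard_eq_toFinset_card _ hfin ▸ hcard :
            hfin.toFinset.card ≤ N)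
  rw [← ENNReal.tsum_mul_right]
  refine Summable.tsum_le_of_sum_le ENNReal.summable fun s => ?_
  calc ∑ i ∈ s, ENNReal.ofReal (Θ (y i)) * μ Q
      ≤ ∑ i ∈ s, ∫⁻ x, (y i • Q).indicator F x ∂μ :=
        Finset.sum_le_sum fun i _ => step1 i
    _ = ∫⁻ x, ∑ i ∈ s, (y i • Q).indicator F x ∂μ :=
        (lintegral_finset_sum' s fun i _ => (hFmeas.indicator (hsetmeas i))).symm
    _ ≤ ∫⁻ x, (N : ℝ≥0∞) * F x ∂μ := lintegral_mono fun x =>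
        le_trans (Summable.sum_le_tsum s (fun i _ => zero_le) ENNReal.summable) (step3 x)
    _ = (N : ℝ≥0∞) * ∫⁻ x, F x ∂μ := lintegral_const_mul' _ _ (by simp)

lemma key_real {G : Type*} [Group G] [TopologicalSpace G] [IsTopologicalGroup G]
    [MeasurableSpace G] [BorelSpace G]
    (μ : Measure G) [μ.IsHaarMeasure]
    (Q : Set G) (hQopen : IsOpen Q) (hQone : (1 : G) ∈ Q) (hQsymm : Q⁻¹ = Q)
    (hQcomp : IsCompact (closure Q)) (hQpos : 0 < μ Q) (hQfin : μ Q ≠ ∞)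
    (Θ : G → ℝ) (hΘc : Continuous Θ) (hΘ0 : ∀ x, 0 ≤ Θ x)
    (hMQΘ : Integrable (fun x => ⨆ q ∈ Q, Θ (x * q)) μ)
    {ι : Type*} (y : ι → G) (N : ℕ)
    (hcount : ∀ x : G, {i : ι | y i ∈ x • Q}.Finite ∧ {i : ι | y i ∈ x • Q}.ncard ≤ N) :
    Summable (fun i => Θ (y i)) ∧
      ∑' i, Θ (y i) ≤ (N : ℝ) / (μ Q).toReal * ∫ x, (⨆ q ∈ Q, Θ (x * q)) ∂μ := by
  set Fr : G → ℝ := fun x => ⨆ q ∈ Q, Θ (x * q) with hFr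
  have hF0 : ∀ x, 0 ≤ Fr x := fun x =>
    le_trans (hΘ0 x) (envelope_le hQcomp hΘc ⟨1, hQone, by simp⟩)
  set I : ℝ≥0∞ := ∫⁻ x, ENNReal.ofReal (Fr x) ∂μ with hIdef
  have hIfin : I ≠ ∞ := hMQΘ.lintegral_lt_top.ne
  have hint : ∫ x, Fr x ∂μ = I.toReal :=
    integral_eq_lintegral_of_nonneg_ae (Filter.Eventually.of_forall hF0)
      hMQΘ.aestronglyMeasurable
  have key := key_count μ Q hQopen hQsymm hQcomp Θ hΘc hMQΘ.aemeasurable y N hcount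
  set T : ℝ≥0∞ := ∑' i, ENNReal.ofReal (Θ (y i)) with hTdef
  have hT : T ≤ (N : ℝ≥0∞) * I / μ Q :=
    (ENNReal.le_div_iff_mul_le (Or.inl hQpos.ne') (Or.inl hQfin)).2 key
  have hRHSfin : (N : ℝ≥0∞) * I / μ Q ≠ ∞ := by
    apply (ENNReal.div_lt_top _ hQpos.ne').ne
    exact ENNReal.mul_ne_top (by simp) hIfin
  have hTne : T ≠ ∞ := ne_top_of_le_ne_top hRHSfin hT
  have hsum : Summable fun i => (Θ (y i)).toNNReal := by
    apply ENNReal.tsum_coe_ne_top_iff_summable.1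
    convert hTne using 2
    rfl
  have hsumR : Summable fun i => Θ (y i) :=
    (NNReal.summable_coe.2 hsum).congr fun i => Real.coe_toNNReal _ (hΘ0 _)
  refine ⟨hsumR, ?_⟩
  have hTR : T.toReal = ∑' i, Θ (y i) := by
    have h1 : T = ((∑' i, (Θ (y i)).toNNReal : ℝ≥0) : ℝ≥0∞) := by
      rw [ENNReal.coe_tsum hsum]
      exact tsum_congr fun i => by simp [ENNReal.ofReal]
    rw [h1, ENNReal.coe_toReal, NNReal.coe_tsum]
    exact tsum_congr fun i => Real.coe_toNNReal _ (hΘ0 _)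
  calc ∑' i, Θ (y i) = T.toReal := hTR.symm
    _ ≤ ((N : ℝ≥0∞) * I / μ Q).toReal := ENNReal.toReal_mono hRHSfin hT
    _ = (N : ℝ) / (μ Q).toReal * ∫ x, Fr x ∂μ := by
        rw [ENNReal.toReal_div, ENNReal.toReal_mul, hint]
        simp only [ENNReal.toReal_natCast]
        ring

/-- Proposition 4.3 (ii)&(iii): a matrix `M` dominated by a continuous envelope
`Θ` with `M_Q Θ ∈ L¹(G)` over relatively separated families `Λ, Γ` satisfies the
Schur conditions and defines a bounded operator `ℓ^p(Γ) → ℓ^p(Λ)` for all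
`p ∈ [1,∞]`. -/
theorem convolution_dominated_matrix_schur_and_bounded
    {G : Type*} [Group G] [TopologicalSpace G] [IsTopologicalGroup G]
    [LocallyCompactSpace G] [SigmaCompactSpace G]
    [MeasurableSpace G] [BorelSpace G]
    (μ : Measure G) [μ.IsHaarMeasure]
    -- fixed symmetric open relatively compact unit neighborhood Q
    (Q : Set G) (hQopen : IsOpen Q) (hQone : (1 : G) ∈ Q) (hQsymm : Q⁻¹ = Q)
    (hQcomp : IsCompact (closure Q)) (hQpos : 0 < μ Q) (hQfin : μ Q ≠ ∞)
    -- relatively separated families with Rel(Λ) ≤ NΛ, Rel(Γ) ≤ NΓ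
    {ιΛ ιΓ : Type*} (Λ : ιΛ → G) (Γ : ιΓ → G) (NΛ NΓ : ℕ)
    (hΛ : ∀ x : G, {i : ιΛ | Λ i ∈ x • Q}.Finite ∧ {i : ιΛ | Λ i ∈ x • Q}.ncard ≤ NΛ)
    (hΓ : ∀ x : G, {i : ιΓ | Γ i ∈ x • Q}.Finite ∧ {i : ιΓ | Γ i ∈ x • Q}.ncard ≤ NΓ)
    -- a continuous nonnegative envelope with M_Q Θ ∈ L¹
    (Θ : G → ℝ) (hΘc : Continuous Θ) (hΘ0 : ∀ x, 0 ≤ Θ x)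
    (hMQΘ : Integrable (fun x => ⨆ q ∈ Q, Θ (x * q)) μ)
    -- the dominated matrix
    (M : ιΛ → ιΓ → ℂ)
    (hM : ∀ l g, ‖M l g‖ ≤ min (Θ ((Γ g)⁻¹ * Λ l)) (Θ ((Λ l)⁻¹ * Γ g))) :
    (∀ g : ιΓ, Summable (fun l => ‖M l g‖) ∧
        ∑' l : ιΛ, ‖M l g‖
          ≤ (NΛ : ℝ) / (μ Q).toReal * ∫ x, (⨆ q ∈ Q, Θ (x * q)) ∂μ) ∧
    (∀ l : ιΛ, Summable (fun g => ‖M l g‖) ∧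
        ∑' g : ιΓ, ‖M l g‖
          ≤ (NΓ : ℝ) / (μ Q).toReal * ∫ x, (⨆ q ∈ Q, Θ (x * q)) ∂μ) ∧
    (∀ p : ℝ≥0∞, 1 ≤ p → ∀ c : ιΓ → ℂ, ∀ hc : Memℓp c p,
        ∃ hMc : Memℓp (fun l : ιΛ => ∑' g : ιΓ, M l g * c g) p,
          ‖(⟨fun l : ιΛ => ∑' g : ιΓ, M l g * c g, hMc⟩ : lp (fun _ : ιΛ => ℂ) p)‖
            ≤ ((max NΛ NΓ : ℕ) : ℝ) / (μ Q).toReal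
                * (∫ x, (⨆ q ∈ Q, Θ (x * q)) ∂μ)
                * ‖(⟨c, hc⟩ : lp (fun _ : ιΓ => ℂ) p)‖) := by
  have hcolKey : ∀ g : ιΓ, Summable (fun l => ‖M l g‖) ∧
      ∑' l : ιΛ, ‖M l g‖
        ≤ (NΛ : ℝ) / (μ Q).toReal * ∫ x, (⨆ q ∈ Q, Θ (x * q)) ∂μ := by
    intro g
    have hcount : ∀ x : G, {l : ιΛ | (Γ g)⁻¹ * Λ l ∈ x • Q}.Finite ∧
        {l : ιΛ | (Γ g)⁻¹ * Λ l ∈ x • Q}.ncard ≤ NΛ := by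
      intro x
      have hset : {l : ιΛ | (Γ g)⁻¹ * Λ l ∈ x • Q} = {l : ιΛ | Λ l ∈ (Γ g * x) • Q} := by
        ext l
        simp only [Set.mem_setOf_eq, Set.mem_smul_set_iff_inv_smul_mem, smul_eq_mul,
          mul_inv_rev, mul_assoc]
      rw [hset]; exact hΛ (Γ g * x)
    obtain ⟨hs, hb⟩ := key_real μ Q hQopen hQone hQsymm hQcomp hQpos hQfin Θ hΘc hΘ0 hMQΘ
      (fun l => (Γ g)⁻¹ * Λ l) NΛ hcount
    have hle : ∀ l, ‖M l g‖ ≤ Θ ((Γ g)⁻¹ * Λ l) := fun l => (hM l g).trans (min_le_left _ _)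
    have hs' : Summable fun l => ‖M l g‖ :=
      Summable.of_nonneg_of_le (fun l => norm_nonneg _) hle hs
    exact ⟨hs', (Summable.tsum_le_tsum hle hs' hs).trans hb⟩
  have hrowKey : ∀ l : ιΛ, Summable (fun g => ‖M l g‖) ∧
      ∑' g : ιΓ, ‖M l g‖
        ≤ (NΓ : ℝ) / (μ Q).toReal * ∫ x, (⨆ q ∈ Q, Θ (x * q)) ∂μ := by
    intro l
    have hcount : ∀ x : G, {g : ιΓ | (Λ l)⁻¹ * Γ g ∈ x • Q}.Finite ∧
        {g : ιΓ | (Λ l)⁻¹ * Γ g ∈ x • Q}.ncard ≤ NΓ := by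
      intro x
      have hset : {g : ιΓ | (Λ l)⁻¹ * Γ g ∈ x • Q} = {g : ιΓ | Γ g ∈ (Λ l * x) • Q} := by
        ext g
        simp only [Set.mem_setOf_eq, Set.mem_smul_set_iff_inv_smul_mem, smul_eq_mul,
          mul_inv_rev, mul_assoc]
      rw [hset]; exact hΓ (Λ l * x)
    obtain ⟨hs, hb⟩ := key_real μ Q hQopen hQone hQsymm hQcomp hQpos hQfin Θ hΘc hΘ0 hMQΘ
      (fun g => (Λ l)⁻¹ * Γ g) NΓ hcount
    have hle : ∀ g, ‖M l g‖ ≤ Θ ((Λ l)⁻¹ * Γ g) := fun g => (hM l g).trans (min_le_right _ _)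
    have hs' : Summable fun g => ‖M l g‖ :=
      Summable.of_nonneg_of_le (fun g => norm_nonneg _) hle hs
    exact ⟨hs', (Summable.tsum_le_tsum hle hs' hs).trans hb⟩
  refine ⟨hcolKey, hrowKey, ?_⟩
  intro p hp c hc
  haveI : Fact (1 ≤ p) := ⟨hp⟩
  have hF0 : ∀ x, 0 ≤ ⨆ q ∈ Q, Θ (x * q) := fun x =>
    le_trans (hΘ0 x) (envelope_le hQcomp hΘc ⟨1, hQone, by simp⟩)
  have htQ : 0 < (μ Q).toReal := ENNReal.toReal_pos hQpos.ne' hQfin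
  set Ir : ℝ := ∫ x, (⨆ q ∈ Q, Θ (x * q)) ∂μ with hIrdef
  have hIr0 : 0 ≤ Ir := integral_nonneg hF0
  set KA : ℝ := (NΛ : ℝ) / (μ Q).toReal * Ir with hKAdef
  set KB : ℝ := (NΓ : ℝ) / (μ Q).toReal * Ir with hKBdef
  set Cst : ℝ := ((max NΛ NΓ : ℕ) : ℝ) / (μ Q).toReal * Ir with hCstdef
  have hKA0 : 0 ≤ KA := mul_nonneg (div_nonneg (Nat.cast_nonneg _) ENNReal.toReal_nonneg) hIr0
  have hKB0 : 0 ≤ KB := mul_nonneg (div_nonneg (Nat.cast_nonneg _) ENNReal.toReal_nonneg) hIr0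
  have hC0 : 0 ≤ Cst := mul_nonneg (div_nonneg (Nat.cast_nonneg _) ENNReal.toReal_nonneg) hIr0
  have hKAC : KA ≤ Cst := by
    rw [hKAdef, hCstdef]
    have hmax : (NΛ : ℝ) ≤ ((max NΛ NΓ : ℕ) : ℝ) := by exact_mod_cast le_max_left NΛ NΓ
    exact mul_le_mul_of_nonneg_right (div_le_div_of_nonneg_right hmax htQ.le) hIr0
  have hKBC : KB ≤ Cst := by
    rw [hKBdef, hCstdef]
    have hmax : (NΓ : ℝ) ≤ ((max NΛ NΓ : ℕ) : ℝ) := by exact_mod_cast le_max_right NΛ NΓ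
    exact mul_le_mul_of_nonneg_right (div_le_div_of_nonneg_right hmax htQ.le) hIr0
  have hp0 : p ≠ 0 := (zero_lt_one.trans_le hp).ne'
  set nc : ℝ := ‖(⟨c, hc⟩ : lp (fun _ : ιΓ => ℂ) p)‖ with hncdef
  have hnc0 : 0 ≤ nc := by rw [hncdef]; exact norm_nonneg _
  have hcb : ∀ g, ‖c g‖ ≤ nc := fun g => lp.norm_apply_le_norm hp0 ⟨c, hc⟩ g
  have hsumMg : ∀ l, Summable fun g => ‖M l g‖ * ‖c g‖ := by
    intro l
    refine Summable.of_nonneg_of_le (fun g => mul_nonneg (norm_nonneg _) (norm_nonneg _))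
      (fun g => mul_le_mul_of_nonneg_left (hcb g) (norm_nonneg _)) ((hrowKey l).1.mul_right nc)
  have hsum_inner : ∀ l, Summable fun g => ‖M l g * c g‖ := fun l =>
    (hsumMg l).congr fun g => (norm_mul _ _).symm
  set f : ιΛ → ℂ := fun l => ∑' g, M l g * c g with hfdef
  have hfl : ∀ l, ‖f l‖ ≤ ∑' g, ‖M l g‖ * ‖c g‖ := fun l =>
    (norm_tsum_le_tsum_norm (hsum_inner l)).trans
      (le_of_eq (tsum_congr fun g => norm_mul _ _))
  rcases eq_or_ne p ∞ with rfl | hptop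
  · -- p = ∞
    have hbound : ∀ l, ‖f l‖ ≤ KB * nc := by
      intro l
      refine (hfl l).trans ?_
      calc ∑' g, ‖M l g‖ * ‖c g‖
          ≤ ∑' g, ‖M l g‖ * nc :=
            Summable.tsum_le_tsum (fun g => mul_le_mul_of_nonneg_left (hcb g) (norm_nonneg _))
              (hsumMg l) ((hrowKey l).1.mul_right nc)
        _ = (∑' g, ‖M l g‖) * nc := tsum_mul_right
        _ ≤ KB * nc := mul_le_mul_of_nonneg_right (hrowKey l).2 hnc0
    have hMc : Memℓp f ∞ := memℓp_infty ⟨KB * nc, by rintro _ ⟨l, rfl⟩; exact hbound l⟩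
    refine ⟨hMc, ?_⟩
    refine lp.norm_le_of_forall_le (mul_nonneg hC0 hnc0) fun l => ?_
    exact (hbound l).trans (mul_le_mul_of_nonneg_right hKBC hnc0)
  · -- p < ∞
    have hr1 : 1 ≤ p.toReal := by
      have := ENNReal.toReal_mono hptop hp
      simpa using this
    have hr0 : 0 < p.toReal := lt_of_lt_of_le zero_lt_one hr1
    have hcsum : Summable fun g => ‖c g‖ ^ p.toReal := (memℓp_gen_iff hr0).1 hc
    have hncr : nc = (∑' g, ‖c g‖ ^ p.toReal) ^ (1 / p.toReal) :=
      lp.norm_eq_tsum_rpow hr0 ⟨c, hc⟩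
    rcases eq_or_lt_of_le hr1 with hr1' | hrlt
    · -- p.toReal = 1
      have hc1 : Summable fun g => ‖c g‖ := hcsum.congr fun g => by
        rw [← hr1', Real.rpow_one]
      have hTbound : ∀ s : Finset ιΛ, ∑ l ∈ s, ‖f l‖ ≤ KA * ∑' g, ‖c g‖ := by
        intro s
        calc ∑ l ∈ s, ‖f l‖
            ≤ ∑ l ∈ s, ∑' g, ‖M l g‖ * ‖c g‖ := Finset.sum_le_sum fun l _ => hfl l
          _ = ∑' g, ∑ l ∈ s, ‖M l g‖ * ‖c g‖ := (Summable.tsum_finsetSum fun l _ => hsumMg l).symm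
          _ ≤ ∑' g, KA * ‖c g‖ := by
              refine Summable.tsum_le_tsum (fun g => ?_) (summable_sum fun l _ => hsumMg l)
                (hc1.mul_left KA)
              rw [← Finset.sum_mul]
              exact mul_le_mul_of_nonneg_right
                ((Summable.sum_le_tsum s (fun l _ => norm_nonneg _) (hcolKey g).1).trans (hcolKey g).2)
                (norm_nonneg _)
          _ = KA * ∑' g, ‖c g‖ := tsum_mul_left
      have hfs : Summable fun l => ‖f l‖ :=
        summable_of_sum_le (fun l => norm_nonneg _) hTbound
      have hMc : Memℓp f p := memℓp_gen
        (by exact hfs.congr fun l => by rw [← hr1', Real.rpow_one])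
      refine ⟨hMc, ?_⟩
      have hnorm : ‖(⟨f, hMc⟩ : lp (fun _ : ιΛ => ℂ) p)‖ = ∑' l, ‖f l‖ := by
        rw [lp.norm_eq_tsum_rpow hr0]
        rw [← hr1']
        simp [Real.rpow_one]
      have hnc1 : nc = ∑' g, ‖c g‖ := by
        rw [hncr, ← hr1']
        simp [Real.rpow_one]
      rw [hnorm, hnc1]
      calc ∑' l, ‖f l‖ ≤ KA * ∑' g, ‖c g‖ := Summable.tsum_le_of_sum_le hfs hTbound
        _ ≤ Cst * ∑' g, ‖c g‖ :=
            mul_le_mul_of_nonneg_right hKAC (tsum_nonneg fun g => norm_nonneg _)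
    · -- 1 < p.toReal
      set r : ℝ := p.toReal with hrdef
      have hrne : r ≠ 0 := hr0.ne'
      have hq : r.HolderConjugate (Real.conjExponent r) := Real.HolderConjugate.conjExponent hrlt
      set s : ℝ := Real.conjExponent r with hsdef
      have hs0 : 0 < s := hq.symm.pos
      have hsne : s ≠ 0 := hs0.ne'
      have hinv : 1 / r + 1 / s = 1 := by
        rw [one_div, one_div]; exact hq.inv_add_inv_eq_one
      -- T l := ∑' g, ‖M l g‖ * ‖c g‖ ^ r
      set T : ιΛ → ℝ := fun l => ∑' g, ‖M l g‖ * ‖c g‖ ^ r with hTdef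
      have hT0 : ∀ l, 0 ≤ T l := fun l =>
        tsum_nonneg fun g => mul_nonneg (norm_nonneg _) (Real.rpow_nonneg (norm_nonneg _) _)
      have hTg : ∀ l, Summable fun g => ‖M l g‖ * ‖c g‖ ^ r := by
        intro l
        refine Summable.of_nonneg_of_le
          (fun g => mul_nonneg (norm_nonneg _) (Real.rpow_nonneg (norm_nonneg _) _))
          (fun g => mul_le_mul_of_nonneg_left
            (Real.rpow_le_rpow (norm_nonneg _) (hcb g) hr0.le) (norm_nonneg _))
          ((hrowKey l).1.mul_right (nc ^ r))
      -- Hölder at each l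
      have hfl' : ∀ l, ‖f l‖ ≤ KB ^ (1 / s) * T l ^ (1 / r) := by
        intro l
        have hf1sum : Summable fun g => (‖M l g‖ ^ (1 / s)) ^ s :=
          (hrowKey l).1.congr fun g => by
            rw [← Real.rpow_mul (norm_nonneg _), one_div, inv_mul_cancel₀ hsne, Real.rpow_one]
        have hf2sum : Summable fun g => (‖M l g‖ ^ (1 / r) * ‖c g‖) ^ r :=
          (hTg l).congr fun g => by
            rw [Real.mul_rpow (Real.rpow_nonneg (norm_nonneg _) _) (norm_nonneg _),
              ← Real.rpow_mul (norm_nonneg _), one_div, inv_mul_cancel₀ hrne, Real.rpow_one]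
        have hold := Real.inner_le_Lp_mul_Lq_tsum_of_nonneg hq.symm
          (fun g => Real.rpow_nonneg (norm_nonneg _) _)
          (fun g => mul_nonneg (Real.rpow_nonneg (norm_nonneg _) _) (norm_nonneg _))
          hf1sum hf2sum
        have hprod : ∀ g : ιΓ, ‖M l g‖ ^ (1 / s) * (‖M l g‖ ^ (1 / r) * ‖c g‖)
            = ‖M l g‖ * ‖c g‖ := by
          intro g
          rw [← mul_assoc, ← Real.rpow_add' (norm_nonneg _) (by rw [add_comm, hinv]; norm_num)]
          rw [add_comm, hinv, Real.rpow_one]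
        rw [tsum_congr hprod] at hold
        have e1 : (∑' g, (‖M l g‖ ^ (1 / s)) ^ s) = ∑' g, ‖M l g‖ :=
          tsum_congr fun g => by
            rw [← Real.rpow_mul (norm_nonneg _), one_div, inv_mul_cancel₀ hsne, Real.rpow_one]
        have e2 : (∑' g, (‖M l g‖ ^ (1 / r) * ‖c g‖) ^ r) = T l :=
          tsum_congr fun g => by
            rw [Real.mul_rpow (Real.rpow_nonneg (norm_nonneg _) _) (norm_nonneg _),
              ← Real.rpow_mul (norm_nonneg _), one_div, inv_mul_cancel₀ hrne, Real.rpow_one]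
        rw [e1, e2] at hold
        refine (hfl l).trans (hold.trans ?_)
        exact mul_le_mul_of_nonneg_right
          (Real.rpow_le_rpow (tsum_nonneg fun g => norm_nonneg _) (hrowKey l).2
            (one_div_nonneg.2 hs0.le))
          (Real.rpow_nonneg (hT0 l) _)
      have hflr : ∀ l, ‖f l‖ ^ r ≤ KB ^ (r / s) * T l := by
        intro l
        calc ‖f l‖ ^ r ≤ (KB ^ (1 / s) * T l ^ (1 / r)) ^ r :=
              Real.rpow_le_rpow (norm_nonneg _) (hfl' l) hr0.le
          _ = KB ^ (r / s) * T l := by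
              rw [Real.mul_rpow (Real.rpow_nonneg hKB0 _) (Real.rpow_nonneg (hT0 l) _),
                ← Real.rpow_mul hKB0, ← Real.rpow_mul (hT0 l)]
              have h1 : 1 / s * r = r / s := by ring
              have h2 : 1 / r * r = 1 := by field_simp
              rw [h1, h2, Real.rpow_one]
      have hTbound : ∀ s' : Finset ιΛ, ∑ l ∈ s', T l ≤ KA * ∑' g, ‖c g‖ ^ r := by
        intro s'
        calc ∑ l ∈ s', T l
            = ∑' g, ∑ l ∈ s', ‖M l g‖ * ‖c g‖ ^ r := (Summable.tsum_finsetSum fun l _ => hTg l).symm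
          _ ≤ ∑' g, KA * ‖c g‖ ^ r := by
              refine Summable.tsum_le_tsum (fun g => ?_) (summable_sum fun l _ => hTg l)
                (hcsum.mul_left KA)
              rw [← Finset.sum_mul]
              exact mul_le_mul_of_nonneg_right
                ((Summable.sum_le_tsum s' (fun l _ => norm_nonneg _) (hcolKey g).1).trans (hcolKey g).2)
                (Real.rpow_nonneg (norm_nonneg _) _)
          _ = KA * ∑' g, ‖c g‖ ^ r := tsum_mul_left
      have hTsummable : Summable T := summable_of_sum_le hT0 hTbound
      have hTle : ∑' l, T l ≤ KA * ∑' g, ‖c g‖ ^ r := Summable.tsum_le_of_sum_le hTsummable hTbound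
      have hfsum_r : Summable fun l => ‖f l‖ ^ r :=
        Summable.of_nonneg_of_le (fun l => Real.rpow_nonneg (norm_nonneg _) _) hflr
          (hTsummable.mul_left _)
      have hMc : Memℓp f p := memℓp_gen hfsum_r
      refine ⟨hMc, ?_⟩
      have hnorm : ‖(⟨f, hMc⟩ : lp (fun _ : ιΛ => ℂ) p)‖ = (∑' l, ‖f l‖ ^ r) ^ (1 / r) :=
        lp.norm_eq_tsum_rpow hr0 _
      have hstep : (∑' l, ‖f l‖ ^ r) ≤ KB ^ (r / s) * (KA * ∑' g, ‖c g‖ ^ r) := by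
        calc ∑' l, ‖f l‖ ^ r ≤ ∑' l, KB ^ (r / s) * T l :=
              Summable.tsum_le_tsum hflr hfsum_r (hTsummable.mul_left _)
          _ = KB ^ (r / s) * ∑' l, T l := tsum_mul_left
          _ ≤ _ := mul_le_mul_of_nonneg_left hTle (Real.rpow_nonneg hKB0 _)
      have hsum_c_nonneg : 0 ≤ ∑' g, ‖c g‖ ^ r :=
        tsum_nonneg fun g => Real.rpow_nonneg (norm_nonneg _) _
      have hCC : KB ^ (1 / s) * KA ^ (1 / r) ≤ Cst := by
        rcases eq_or_lt_of_le hC0 with hC | hC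
        · have hKA' : KA = 0 := le_antisymm (hKAC.trans hC.ge) hKA0
          have hKB' : KB = 0 := le_antisymm (hKBC.trans hC.ge) hKB0
          rw [hKA', hKB', Real.zero_rpow (one_div_ne_zero hsne),
            Real.zero_rpow (one_div_ne_zero hrne), zero_mul]
          exact hC0
        · calc KB ^ (1 / s) * KA ^ (1 / r) ≤ Cst ^ (1 / s) * Cst ^ (1 / r) :=
              mul_le_mul (Real.rpow_le_rpow hKB0 hKBC (one_div_nonneg.2 hs0.le))
                (Real.rpow_le_rpow hKA0 hKAC (one_div_nonneg.2 hr0.le))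
                (Real.rpow_nonneg hKA0 _) (Real.rpow_nonneg hC0 _)
            _ = Cst := by
                have h3 : 1 / s + 1 / r = 1 := by rw [add_comm]; exact hinv
                rw [← Real.rpow_add hC, h3, Real.rpow_one]
      rw [hnorm, hncr]
      calc (∑' l, ‖f l‖ ^ r) ^ (1 / r)
          ≤ (KB ^ (r / s) * (KA * ∑' g, ‖c g‖ ^ r)) ^ (1 / r) :=
            Real.rpow_le_rpow (tsum_nonneg fun l => Real.rpow_nonneg (norm_nonneg _) _) hstep
              (one_div_nonneg.2 hr0.le)
        _ = KB ^ (1 / s) * KA ^ (1 / r) * (∑' g, ‖c g‖ ^ r) ^ (1 / r) := by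
            rw [Real.mul_rpow (Real.rpow_nonneg hKB0 _) (mul_nonneg hKA0 hsum_c_nonneg),
              Real.mul_rpow hKA0 hsum_c_nonneg, ← Real.rpow_mul hKB0]
            have h4 : r / s * (1 / r) = 1 / s := by field_simp
            rw [h4, ← mul_assoc]
        _ ≤ Cst * (∑' g, ‖c g‖ ^ r) ^ (1 / r) :=
            mul_le_mul_of_nonneg_right hCC (Real.rpow_nonneg hsum_c_nonneg _)
end

section
/- Let G be a σ-compact locally compact group, Q a symmetric open relatively compact unit neighborhood, and Λ, Γ, Ω relatively separated families in G. Suppose M = (M_{ω,γ}) satisfies |M_{ω,γ}| ≤ min{Φ(γ⁻¹ω), Φ(ω⁻¹γ)} and N = (N_{γ,λ}) satisfies |N_{γ,λ}| ≤ min{Φ'(λ⁻¹γ), Φ'(γ⁻¹λ)} for continuous nonnegative Φ, Φ' with M_QΦ, M_Q^RΦ, M_QΦ', M_Q^RΦ' ∈ L¹(G). Then the product matrix (MN)_{ω,λ} = Σ_{γ∈Γ} M_{ω,γ} N_{γ,λ} is well-defined and satisfies |(MN)_{ω,λ}| ≤ min{Ψ(λ⁻¹ω), Ψ(ω⁻¹λ)}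 where Ψ = (Rel(Γ)/μ_G(Q)) · [ (M_QΦ') ∗ (M_Q^RΦ) + (M_QΦ) ∗ (M_Q^RΦ') ]. -/
open MeasureTheory Measure
open scoped Pointwise ENNReal NNReal

private lemma meas_biSup {δ : Type*} [TopologicalSpace δ] [MeasurableSpace δ]
    [OpensMeasurableSpace δ] {κ : Type*} (Q : Set κ) (f : κ → δ → ℝ≥0∞)
    (hf : ∀ q ∈ Q, Continuous (f q)) :
    Measurable fun x => ⨆ q ∈ Q, f q x := by
  apply LowerSemicontinuous.measurable
  rw [lowerSemicontinuous_iff_isOpen_preimage]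
  intro y
  have h : (fun x => ⨆ q ∈ Q, f q x) ⁻¹' Set.Ioi y = ⋃ q ∈ Q, (f q) ⁻¹' Set.Ioi y := by
    ext x
    simp [lt_iSup_iff]
  rw [h]
  exact isOpen_biUnion fun q hq => (hf q hq).isOpen_preimage _ isOpen_Ioi

private lemma count_sum_le {G : Type*} [Group G] [TopologicalSpace G] [IsTopologicalGroup G]
    [SigmaCompactSpace G] [MeasurableSpace G] [BorelSpace G]
    (μ : Measure G) [μ.IsMulLeftInvariant]
    {Q : Set G} (hQopen : IsOpen Q) (hQone : (1 : G) ∈ Q) (hQsymm : Q⁻¹ = Q)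
    (hQ0 : μ Q ≠ 0) (hQtop : μ Q ≠ ∞)
    {ι : Type*} (P : ι → G) (NP : ℕ)
    (hP : ∀ x : G, {i | P i ∈ x • Q}.Finite ∧ {i | P i ∈ x • Q}.ncard ≤ NP)
    (f m : G → ℝ≥0∞) (hm : Measurable m)
    (hb : ∀ i t, t ∈ P i • Q → f (P i) ≤ m t) :
    ∑' i, f (P i) ≤ ((NP : ℝ≥0∞) / μ Q) * ∫⁻ t, m t ∂μ := by
  -- countability of the index type
  have hcen : ∀ K : Set G, IsCompact K → {i | P i ∈ K}.Finite := by
    intro K hK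
    obtain ⟨F, hF⟩ := hK.elim_finite_subcover (fun x : G => x • Q)
      (fun x => hQopen.smul x)
      (fun x hx => Set.mem_iUnion.mpr ⟨x, ⟨1, hQone, mul_one x⟩⟩)
    refine Set.Finite.subset (Set.Finite.biUnion F.finite_toSet fun x _ => (hP x).1) ?_
    intro i hi
    obtain ⟨x, hx, hmem⟩ := Set.mem_iUnion₂.mp (hF hi)
    exact Set.mem_iUnion₂.mpr ⟨x, hx, hmem⟩
  have hcount : Countable ι := by
    have huniv : (Set.univ : Set ι) = ⋃ n, {i | P i ∈ compactCovering G n} := by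
      ext i
      simp only [Set.mem_univ, true_iff, Set.mem_iUnion, Set.mem_setOf_eq]
      have : P i ∈ ⋃ n, compactCovering G n := by
        rw [iUnion_compactCovering]; trivial
      exact Set.mem_iUnion.mp this
    have : (Set.univ : Set ι).Countable := by
      rw [huniv]
      exact Set.countable_iUnion fun n =>
        (hcen _ (isCompact_compactCovering G n)).countable
    exact Set.countable_univ_iff.mp this
  have hsmul_meas : ∀ x : G, MeasurableSet (x • Q) := fun x =>
    (hQopen.smul x).measurableSet
  have hμsmul : ∀ x : G, μ (x • Q) = μ Q := by
    intro x
    have h : x • Q = (fun y => x⁻¹ * y) ⁻¹' Q := by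
      ext y
      simp [Set.mem_smul_set_iff_inv_smul_mem, smul_eq_mul]
    rw [h, measure_preimage_mul]
  have hQmem : ∀ y : G, y ∈ Q ↔ y⁻¹ ∈ Q := by
    intro y
    conv_lhs => rw [← hQsymm]
    exact Set.mem_inv
  have hmem : ∀ i (t : G), t ∈ P i • Q ↔ P i ∈ t • Q := by
    intro i t
    rw [Set.mem_smul_set_iff_inv_smul_mem, Set.mem_smul_set_iff_inv_smul_mem,
      smul_eq_mul, smul_eq_mul, hQmem]
    simp [mul_inv_rev]
  have key : μ Q * ∑' i, f (P i) ≤ (NP : ℝ≥0∞) * ∫⁻ t, m t ∂μ := by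
    calc μ Q * ∑' i, f (P i)
        = ∑' i, ∫⁻ t, (P i • Q).indicator (fun _ => f (P i)) t ∂μ := by
          rw [← ENNReal.tsum_mul_left]
          refine tsum_congr fun i => ?_
          rw [lintegral_indicator_const (hsmul_meas (P i)), hμsmul, mul_comm]
      _ ≤ ∑' i, ∫⁻ t, (P i • Q).indicator m t ∂μ := by
          refine ENNReal.tsum_le_tsum fun i => lintegral_mono fun t => ?_
          by_cases ht : t ∈ P i • Q
          · simp only [Set.indicator_of_mem ht]
            exact hb i t ht
          · simp [Set.indicator_of_notMem ht]
      _ = ∫⁻ t, ∑' i, (P i • Q).indicator m t ∂μ := by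
          exact (lintegral_tsum fun i => (hm.indicator (hsmul_meas (P i))).aemeasurable).symm
      _ ≤ ∫⁻ t, (NP : ℝ≥0∞) * m t ∂μ := by
          refine lintegral_mono fun t => ?_
          have h1 : ∀ i, (P i • Q).indicator m t
              = (P i • Q).indicator (1 : G → ℝ≥0∞) t * m t := by
            intro i
            by_cases ht : t ∈ P i • Q <;> simp [ht]
          calc ∑' i, (P i • Q).indicator m t
              = (∑' i, (P i • Q).indicator (1 : G → ℝ≥0∞) t) * m t := by
                rw [← ENNReal.tsum_mul_right]
                exact tsum_congr h1
            _ ≤ (NP : ℝ≥0∞) * m t := by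
                refine mul_le_mul_left ?_ _
                have hfin := (hP t).1
                have heq : ∑' i, (P i • Q).indicator (1 : G → ℝ≥0∞) t
                    = ∑ i ∈ hfin.toFinset, (P i • Q).indicator (1 : G → ℝ≥0∞) t := by
                  refine tsum_eq_sum fun i hi => ?_
                  simp only [Set.Finite.mem_toFinset, Set.mem_setOf_eq] at hi
                  exact Set.indicator_of_notMem (fun h => hi ((hmem i t).mp h)) _
                rw [heq]
                calc ∑ i ∈ hfin.toFinset, (P i • Q).indicator (1 : G → ℝ≥0∞) t
                    ≤ ∑ _i ∈ hfin.toFinset, 1 :=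
                      Finset.sum_le_sum fun i _ => Set.indicator_le_self _ _ t
                  _ = (hfin.toFinset.card : ℝ≥0∞) := by simp
                  _ ≤ (NP : ℝ≥0∞) := by
                      rw [← Set.ncard_eq_toFinset_card _ hfin]
                      exact_mod_cast (hP t).2
      _ = (NP : ℝ≥0∞) * ∫⁻ t, m t ∂μ := lintegral_const_mul _ hm
  calc ∑' i, f (P i) = (μ Q)⁻¹ * (μ Q * ∑' i, f (P i)) := by
        rw [← mul_assoc, ENNReal.inv_mul_cancel hQ0 hQtop, one_mul]
    _ ≤ (μ Q)⁻¹ * ((NP : ℝ≥0∞) * ∫⁻ t, m t ∂μ) := mul_le_mul_right key _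
    _ = ((NP : ℝ≥0∞) / μ Q) * ∫⁻ t, m t ∂μ := by
        rw [ENNReal.div_eq_inv_mul, mul_assoc]

private lemma sum_point_ne_top {G : Type*} [Group G] [TopologicalSpace G] [IsTopologicalGroup G]
    [SigmaCompactSpace G] [MeasurableSpace G] [BorelSpace G]
    (μ : Measure G) [μ.IsMulLeftInvariant]
    {Q : Set G} (hQopen : IsOpen Q) (hQone : (1 : G) ∈ Q) (hQsymm : Q⁻¹ = Q)
    (hQ0 : μ Q ≠ 0) (hQtop : μ Q ≠ ∞)
    {ι : Type*} (P : ι → G) (NP : ℕ)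
    (hP : ∀ x : G, {i | P i ∈ x • Q}.Finite ∧ {i | P i ∈ x • Q}.ncard ≤ NP)
    (Φ : G → ℝ≥0∞) (hΦc : Continuous Φ)
    (hMQΦ : (∫⁻ x, ⨆ q ∈ Q, Φ (x * q) ∂μ) ≠ ∞) (c : G) :
    (∑' i, Φ (c * P i)) ≠ ∞ := by
  have hQmem : ∀ y : G, y ∈ Q ↔ y⁻¹ ∈ Q := by
    intro y
    conv_lhs => rw [← hQsymm]
    exact Set.mem_inv
  have hmeas : Measurable fun t : G => ⨆ q ∈ Q, Φ ((c * t) * q) :=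
    meas_biSup Q (fun q t => Φ ((c * t) * q))
      (fun q _ => hΦc.comp (((continuous_mul_left c).mul continuous_const)))
  have hbound : ∀ i (t : G), t ∈ P i • Q → Φ (c * P i) ≤ ⨆ q ∈ Q, Φ ((c * t) * q) := by
    intro i t ht
    rw [Set.mem_smul_set_iff_inv_smul_mem, smul_eq_mul] at ht
    have hq : ((P i)⁻¹ * t)⁻¹ ∈ Q := (hQmem _).mp ht
    have heq : (c * t) * ((P i)⁻¹ * t)⁻¹ = c * P i := by group
    calc Φ (c * P i) = Φ ((c * t) * ((P i)⁻¹ * t)⁻¹) := by rw [heq]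
      _ ≤ ⨆ q ∈ Q, Φ ((c * t) * q) := le_iSup₂ (f := fun q _ => Φ ((c * t) * q)) _ hq
  have h1 := count_sum_le μ hQopen hQone hQsymm hQ0 hQtop P NP hP
    (fun x => Φ (c * x)) (fun t => ⨆ q ∈ Q, Φ ((c * t) * q)) hmeas hbound
  have h2 : ∫⁻ t, ⨆ q ∈ Q, Φ ((c * t) * q) ∂μ = ∫⁻ x, ⨆ q ∈ Q, Φ (x * q) ∂μ :=
    lintegral_mul_left_eq_self (fun x => ⨆ q ∈ Q, Φ (x * q)) c
  rw [h2] at h1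
  refine ne_top_of_le_ne_top (ENNReal.mul_ne_top ?_ hMQΦ) h1
  rw [ENNReal.div_eq_inv_mul]
  exact ENNReal.mul_ne_top (ENNReal.inv_ne_top.mpr hQ0) (ENNReal.natCast_ne_top NP)

private lemma main_bound {G : Type*} [Group G] [TopologicalSpace G] [IsTopologicalGroup G]
    [SigmaCompactSpace G] [MeasurableSpace G] [BorelSpace G]
    (μ : Measure G) [μ.IsMulLeftInvariant]
    {Q : Set G} (hQopen : IsOpen Q) (hQone : (1 : G) ∈ Q) (hQsymm : Q⁻¹ = Q)
    (hQ0 : μ Q ≠ 0) (hQtop : μ Q ≠ ∞)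
    {ι : Type*} (P : ι → G) (NP : ℕ)
    (hP : ∀ x : G, {i | P i ∈ x • Q}.Finite ∧ {i | P i ∈ x • Q}.ncard ≤ NP)
    (Φ Φ' : G → ℝ≥0∞) (hΦc : Continuous Φ) (hΦ'c : Continuous Φ')
    (ω lam : G) (a b : ι → ℝ≥0∞)
    (ha : ∀ i, a i ≤ Φ ((P i)⁻¹ * ω)) (hb : ∀ i, b i ≤ Φ' (lam⁻¹ * P i)) :
    ∑' i, a i * b i ≤ ((NP : ℝ≥0∞) / μ Q) *
      ∫⁻ t, (⨆ q ∈ Q, Φ' (t * q)) * ⨆ q ∈ Q, Φ (q * (t⁻¹ * (lam⁻¹ * ω))) ∂μ := by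
  have hQmem : ∀ y : G, y ∈ Q ↔ y⁻¹ ∈ Q := by
    intro y
    conv_lhs => rw [← hQsymm]
    exact Set.mem_inv
  set m : G → ℝ≥0∞ :=
    fun t => (⨆ q ∈ Q, Φ' ((lam⁻¹ * t) * q)) * ⨆ q ∈ Q, Φ (q * (t⁻¹ * ω)) with hm_def
  have hm : Measurable m := by
    refine Measurable.mul ?_ ?_
    · exact meas_biSup Q (fun q t => Φ' ((lam⁻¹ * t) * q))
        (fun q _ => hΦ'c.comp ((continuous_mul_left lam⁻¹).mul continuous_const))
    · exact meas_biSup Q (fun q t => Φ (q * (t⁻¹ * ω)))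
        (fun q _ => hΦc.comp (continuous_const.mul (continuous_inv.mul continuous_const)))
  have hbound : ∀ i (t : G), t ∈ P i • Q →
      Φ ((P i)⁻¹ * ω) * Φ' (lam⁻¹ * P i) ≤ m t := by
    intro i t ht
    rw [Set.mem_smul_set_iff_inv_smul_mem, smul_eq_mul] at ht
    set q₀ : G := (P i)⁻¹ * t with hq₀_def
    have hq₀inv : q₀⁻¹ ∈ Q := (hQmem _).mp ht
    have h1 : Φ' (lam⁻¹ * P i) ≤ ⨆ q ∈ Q, Φ' ((lam⁻¹ * t) * q) := by
      have heq : (lam⁻¹ * t) * q₀⁻¹ = lam⁻¹ * P i := by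
        rw [hq₀_def]; group
      calc Φ' (lam⁻¹ * P i) = Φ' ((lam⁻¹ * t) * q₀⁻¹) := by rw [heq]
        _ ≤ _ := le_iSup₂ (f := fun q _ => Φ' ((lam⁻¹ * t) * q)) _ hq₀inv
    have h2 : Φ ((P i)⁻¹ * ω) ≤ ⨆ q ∈ Q, Φ (q * (t⁻¹ * ω)) := by
      have heq : q₀ * (t⁻¹ * ω) = (P i)⁻¹ * ω := by
        rw [hq₀_def]; group
      calc Φ ((P i)⁻¹ * ω) = Φ (q₀ * (t⁻¹ * ω)) := by rw [heq]
        _ ≤ _ := le_iSup₂ (f := fun q _ => Φ (q * (t⁻¹ * ω))) _ ht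
    calc Φ ((P i)⁻¹ * ω) * Φ' (lam⁻¹ * P i)
        = Φ' (lam⁻¹ * P i) * Φ ((P i)⁻¹ * ω) := mul_comm _ _
      _ ≤ m t := mul_le_mul' h1 h2
  have step : ∑' i, a i * b i ≤ ((NP : ℝ≥0∞) / μ Q) * ∫⁻ t, m t ∂μ := by
    refine le_trans (ENNReal.tsum_le_tsum fun i => mul_le_mul' (ha i) (hb i)) ?_
    exact count_sum_le μ hQopen hQone hQsymm hQ0 hQtop P NP hP
      (fun x => Φ (x⁻¹ * ω) * Φ' (lam⁻¹ * x)) m hm hbound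
  have hint : ∫⁻ t, m t ∂μ =
      ∫⁻ t, (⨆ q ∈ Q, Φ' (t * q)) * ⨆ q ∈ Q, Φ (q * (t⁻¹ * (lam⁻¹ * ω))) ∂μ := by
    rw [← lintegral_mul_left_eq_self
      (fun t => (⨆ q ∈ Q, Φ' (t * q)) * ⨆ q ∈ Q, Φ (q * (t⁻¹ * (lam⁻¹ * ω)))) lam⁻¹]
    refine lintegral_congr fun t => ?_
    have heq : (lam⁻¹ * t)⁻¹ * (lam⁻¹ * ω) = t⁻¹ * ω := by group
    simp only [hm_def, heq]
  rw [← hint]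
  exact step

/-- Proposition 4.3 (iv): convolution-dominated matrices are closed under
multiplication, with explicit envelope
`Ψ = (Rel(Γ)/μ(Q)) · [(M_Q Φ') ∗ (M_Q^R Φ) + (M_Q Φ) ∗ (M_Q^R Φ')]`. -/
theorem convolution_dominated_matrix_product
    {G : Type*} [Group G] [TopologicalSpace G] [IsTopologicalGroup G]
    [LocallyCompactSpace G] [SigmaCompactSpace G]
    [MeasurableSpace G] [BorelSpace G]
    (μ : Measure G) [μ.IsHaarMeasure]
    -- fixed symmetric open relatively compact unit neighborhood Q
    (Q : Set G) (hQopen : IsOpen Q) (hQone : (1 : G) ∈ Q) (hQsymm : Q⁻¹ = Q)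
    (hQcomp : IsCompact (closure Q))
    -- relatively separated families with Rel(Γ) ≤ NΓ
    {ιΛ ιΓ ιΩ : Type*} (Λ : ιΛ → G) (Γ : ιΓ → G) (Ω : ιΩ → G) (NΛ NΓ NΩ : ℕ)
    (hΛ : ∀ x : G, {i : ιΛ | Λ i ∈ x • Q}.Finite ∧ {i : ιΛ | Λ i ∈ x • Q}.ncard ≤ NΛ)
    (hΓ : ∀ x : G, {i : ιΓ | Γ i ∈ x • Q}.Finite ∧ {i : ιΓ | Γ i ∈ x • Q}.ncard ≤ NΓ)
    (hΩ : ∀ x : G, {i : ιΩ | Ω i ∈ x • Q}.Finite ∧ {i : ιΩ | Ω i ∈ x • Q}.ncard ≤ NΩ)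
    -- continuous nonnegative (finite-valued) envelopes with integrable maximal functions
    (Φ Φ' : G → ℝ≥0∞) (hΦc : Continuous Φ) (hΦ'c : Continuous Φ')
    (hΦfin : ∀ x, Φ x ≠ ∞) (hΦ'fin : ∀ x, Φ' x ≠ ∞)
    (hMQΦ : (∫⁻ x, ⨆ q ∈ Q, Φ (x * q) ∂μ) ≠ ∞)
    (hMQRΦ : (∫⁻ x, ⨆ q ∈ Q, Φ (q * x) ∂μ) ≠ ∞)
    (hMQΦ' : (∫⁻ x, ⨆ q ∈ Q, Φ' (x * q) ∂μ) ≠ ∞)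
    (hMQRΦ' : (∫⁻ x, ⨆ q ∈ Q, Φ' (q * x) ∂μ) ≠ ∞)
    -- the dominated matrices
    (M : ιΩ → ιΓ → ℂ) (N : ιΓ → ιΛ → ℂ)
    (hM : ∀ o g, (‖M o g‖₊ : ℝ≥0∞) ≤ min (Φ ((Γ g)⁻¹ * Ω o)) (Φ ((Ω o)⁻¹ * Γ g)))
    (hN : ∀ g l, (‖N g l‖₊ : ℝ≥0∞) ≤ min (Φ' ((Λ l)⁻¹ * Γ g)) (Φ' ((Γ g)⁻¹ * Λ l))) :
    ∀ (o : ιΩ) (l : ιΛ),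
      Summable (fun g : ιΓ => M o g * N g l) ∧
      (∑' g : ιΓ, (‖M o g‖₊ : ℝ≥0∞) * (‖N g l‖₊ : ℝ≥0∞))
        ≤ min
            (((NΓ : ℝ≥0∞) / μ Q) *
              ((∫⁻ t, (⨆ q ∈ Q, Φ' (t * q)) * ⨆ q ∈ Q, Φ (q * (t⁻¹ * ((Λ l)⁻¹ * Ω o))) ∂μ)
                + ∫⁻ t, (⨆ q ∈ Q, Φ (t * q)) * ⨆ q ∈ Q, Φ' (q * (t⁻¹ * ((Λ l)⁻¹ * Ω o))) ∂μ))
            (((NΓ : ℝ≥0∞) / μ Q) *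
              ((∫⁻ t, (⨆ q ∈ Q, Φ' (t * q)) * ⨆ q ∈ Q, Φ (q * (t⁻¹ * ((Ω o)⁻¹ * Λ l))) ∂μ)
                + ∫⁻ t, (⨆ q ∈ Q, Φ (t * q)) * ⨆ q ∈ Q, Φ' (q * (t⁻¹ * ((Ω o)⁻¹ * Λ l))) ∂μ)) ∧
      (‖∑' g : ιΓ, M o g * N g l‖₊ : ℝ≥0∞)
        ≤ min
            (((NΓ : ℝ≥0∞) / μ Q) *
              ((∫⁻ t, (⨆ q ∈ Q, Φ' (t * q)) * ⨆ q ∈ Q, Φ (q * (t⁻¹ * ((Λ l)⁻¹ * Ω o))) ∂μ)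
                + ∫⁻ t, (⨆ q ∈ Q, Φ (t * q)) * ⨆ q ∈ Q, Φ' (q * (t⁻¹ * ((Λ l)⁻¹ * Ω o))) ∂μ))
            (((NΓ : ℝ≥0∞) / μ Q) *
              ((∫⁻ t, (⨆ q ∈ Q, Φ' (t * q)) * ⨆ q ∈ Q, Φ (q * (t⁻¹ * ((Ω o)⁻¹ * Λ l))) ∂μ)
                + ∫⁻ t, (⨆ q ∈ Q, Φ (t * q)) * ⨆ q ∈ Q, Φ' (q * (t⁻¹ * ((Ω o)⁻¹ * Λ l))) ∂μ)) := by
  intro o l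
  have hQ0 : μ Q ≠ 0 := (hQopen.measure_pos μ ⟨1, hQone⟩).ne'
  have hQtop : μ Q ≠ ∞ :=
    ((measure_mono subset_closure).trans_lt hQcomp.measure_lt_top).ne
  -- finiteness of the sum of products of envelopes
  have hA : (∑' g, Φ ((Ω o)⁻¹ * Γ g)) ≠ ∞ :=
    sum_point_ne_top μ hQopen hQone hQsymm hQ0 hQtop Γ NΓ hΓ Φ hΦc hMQΦ ((Ω o)⁻¹)
  have hB : (∑' g, Φ' ((Λ l)⁻¹ * Γ g)) ≠ ∞ :=
    sum_point_ne_top μ hQopen hQone hQsymm hQ0 hQtop Γ NΓ hΓ Φ' hΦ'c hMQΦ' ((Λ l)⁻¹)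
  have hSfin : (∑' g, (‖M o g‖₊ : ℝ≥0∞) * (‖N g l‖₊ : ℝ≥0∞)) ≠ ∞ := by
    have h1 : (∑' g, (‖M o g‖₊ : ℝ≥0∞) * (‖N g l‖₊ : ℝ≥0∞))
        ≤ (∑' g, Φ ((Ω o)⁻¹ * Γ g)) * (∑' g, Φ' ((Λ l)⁻¹ * Γ g)) := by
      calc ∑' g, (‖M o g‖₊ : ℝ≥0∞) * (‖N g l‖₊ : ℝ≥0∞)
          ≤ ∑' g, Φ ((Ω o)⁻¹ * Γ g) * Φ' ((Λ l)⁻¹ * Γ g) :=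
            ENNReal.tsum_le_tsum fun g => mul_le_mul'
              ((hM o g).trans (min_le_right _ _)) ((hN g l).trans (min_le_left _ _))
        _ ≤ ∑' g, Φ ((Ω o)⁻¹ * Γ g) * (∑' g', Φ' ((Λ l)⁻¹ * Γ g')) :=
            ENNReal.tsum_le_tsum fun g => mul_le_mul_right (ENNReal.le_tsum g) _
        _ = _ := ENNReal.tsum_mul_right
    exact ne_top_of_le_ne_top (ENNReal.mul_ne_top hA hB) h1
  -- summability
  have hsum_norm : Summable (fun g => ‖M o g * N g l‖₊) := by
    rw [← ENNReal.tsum_coe_ne_top_iff_summable]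
    have h : (∑' g, ((‖M o g * N g l‖₊ : ℝ≥0) : ℝ≥0∞))
        = ∑' g, (‖M o g‖₊ : ℝ≥0∞) * (‖N g l‖₊ : ℝ≥0∞) :=
      tsum_congr fun g => by rw [nnnorm_mul, ENNReal.coe_mul]
    rw [h]
    exact hSfin
  have hsummable : Summable (fun g => M o g * N g l) := hsum_norm.of_nnnorm
  -- the two envelope bounds
  have hbound1 : (∑' g, (‖M o g‖₊ : ℝ≥0∞) * (‖N g l‖₊ : ℝ≥0∞))
      ≤ ((NΓ : ℝ≥0∞) / μ Q) *
        ∫⁻ t, (⨆ q ∈ Q, Φ' (t * q)) * ⨆ q ∈ Q, Φ (q * (t⁻¹ * ((Λ l)⁻¹ * Ω o))) ∂μ :=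
    main_bound μ hQopen hQone hQsymm hQ0 hQtop Γ NΓ hΓ Φ Φ' hΦc hΦ'c (Ω o) (Λ l)
      (fun g => (‖M o g‖₊ : ℝ≥0∞)) (fun g => (‖N g l‖₊ : ℝ≥0∞))
      (fun g => (hM o g).trans (min_le_left _ _))
      (fun g => (hN g l).trans (min_le_left _ _))
  have hbound2 : (∑' g, (‖M o g‖₊ : ℝ≥0∞) * (‖N g l‖₊ : ℝ≥0∞))
      ≤ ((NΓ : ℝ≥0∞) / μ Q) *
        ∫⁻ t, (⨆ q ∈ Q, Φ (t * q)) * ⨆ q ∈ Q, Φ' (q * (t⁻¹ * ((Ω o)⁻¹ * Λ l))) ∂μ := by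
    have h := main_bound μ hQopen hQone hQsymm hQ0 hQtop Γ NΓ hΓ Φ' Φ hΦ'c hΦc (Λ l) (Ω o)
      (fun g => (‖N g l‖₊ : ℝ≥0∞)) (fun g => (‖M o g‖₊ : ℝ≥0∞))
      (fun g => (hN g l).trans (min_le_right _ _))
      (fun g => (hM o g).trans (min_le_right _ _))
    calc ∑' g, (‖M o g‖₊ : ℝ≥0∞) * (‖N g l‖₊ : ℝ≥0∞)
        = ∑' g, (‖N g l‖₊ : ℝ≥0∞) * (‖M o g‖₊ : ℝ≥0∞) :=
          tsum_congr fun g => mul_comm _ _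
      _ ≤ _ := h
  have hbound : (∑' g, (‖M o g‖₊ : ℝ≥0∞) * (‖N g l‖₊ : ℝ≥0∞))
      ≤ min
          (((NΓ : ℝ≥0∞) / μ Q) *
            ((∫⁻ t, (⨆ q ∈ Q, Φ' (t * q)) * ⨆ q ∈ Q, Φ (q * (t⁻¹ * ((Λ l)⁻¹ * Ω o))) ∂μ)
              + ∫⁻ t, (⨆ q ∈ Q, Φ (t * q)) * ⨆ q ∈ Q, Φ' (q * (t⁻¹ * ((Λ l)⁻¹ * Ω o))) ∂μ))
          (((NΓ : ℝ≥0∞) / μ Q) *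
            ((∫⁻ t, (⨆ q ∈ Q, Φ' (t * q)) * ⨆ q ∈ Q, Φ (q * (t⁻¹ * ((Ω o)⁻¹ * Λ l))) ∂μ)
              + ∫⁻ t, (⨆ q ∈ Q, Φ (t * q)) * ⨆ q ∈ Q, Φ' (q * (t⁻¹ * ((Ω o)⁻¹ * Λ l))) ∂μ)) := by
    refine le_min ?_ ?_
    · exact hbound1.trans (mul_le_mul_right le_self_add _)
    · exact hbound2.trans (mul_le_mul_right le_add_self _)
  have hfinal : (‖∑' g, M o g * N g l‖₊ : ℝ≥0∞)
      ≤ ∑' g, (‖M o g‖₊ : ℝ≥0∞) * (‖N g l‖₊ : ℝ≥0∞) := by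
    calc (‖∑' g, M o g * N g l‖₊ : ℝ≥0∞)
        ≤ ((∑' g, ‖M o g * N g l‖₊ : ℝ≥0) : ℝ≥0∞) :=
          ENNReal.coe_le_coe.mpr (nnnorm_tsum_le hsum_norm)
      _ = ∑' g, ((‖M o g * N g l‖₊ : ℝ≥0) : ℝ≥0∞) := ENNReal.coe_tsum hsum_norm
      _ = ∑' g, (‖M o g‖₊ : ℝ≥0∞) * (‖N g l‖₊ : ℝ≥0∞) :=
          tsum_congr fun g => by rw [nnnorm_mul, ENNReal.coe_mul]
  exact ⟨hsummable, hbound, hfinal.trans hbound⟩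
end

section
/- Let G be a σ-compact locally compact group with Haar measure μ_G, and let (g_λ)_{λ∈Λ} ⊂ L²(G) be a family indexed by a relatively separated family Λ such that |g_λ(x)| ≤ min{Φ(λ⁻¹x), Φ(x⁻¹λ)} for all λ ∈ Λ, x ∈ G, where Φ : G → [0,∞) is continuous with Φ, M_Q(Φ^∨) ∈ L¹(G) and Φ^∨ = Φ(·⁻¹). Then (g_λ)_{λ∈Λ} is a Bessel sequence in L²(G): there exists B > 0 with Σ_{λ∈Λ} |⟨f, g_λ⟩|² ≤ B ‖f‖²_{L²} for all f ∈ L²(G). -/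
open MeasureTheory Measure
open scoped Pointwise ENNReal

/-- Lemma 4.5: a system of molecules over a relatively separated family forms a
Bessel sequence in `L²(G)`. -/
theorem molecules_form_bessel_sequence
    {G : Type*} [Group G] [TopologicalSpace G] [IsTopologicalGroup G]
    [LocallyCompactSpace G] [SigmaCompactSpace G]
    [MeasurableSpace G] [BorelSpace G]
    (μ : Measure G) [μ.IsHaarMeasure]
    -- fixed symmetric open relatively compact unit neighborhood Q
    (Q : Set G) (hQopen : IsOpen Q) (hQone : (1 : G) ∈ Q) (hQsymm : Q⁻¹ = Q)
    (hQcomp : IsCompact (closure Q))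
    -- relatively separated family
    {ι : Type*} (Λ : ι → G) (N : ℕ)
    (hsep : ∀ x : G, {i : ι | Λ i ∈ x • Q}.Finite ∧ {i : ι | Λ i ∈ x • Q}.ncard ≤ N)
    -- the molecule system and its envelope Φ, with Φ and M_Q(Φ^∨) ∈ L¹
    (g : ι → G → ℂ) (hgm : ∀ i, AEStronglyMeasurable (g i) μ)
    (Φ : G → ℝ) (hΦc : Continuous Φ) (hΦ0 : ∀ x, 0 ≤ Φ x)
    (hΦ1 : Integrable Φ μ)
    (hΦv : Integrable (fun x => ⨆ q ∈ Q, Φ ((x * q)⁻¹)) μ)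
    (henv : ∀ i x, ‖g i x‖ ≤ min (Φ ((Λ i)⁻¹ * x)) (Φ (x⁻¹ * Λ i))) :
    ∃ B : ℝ, 0 < B ∧ ∀ f : G → ℂ, MemLp f 2 μ →
      Summable (fun i => ‖∫ x, f x * (starRingEnd ℂ) (g i x) ∂μ‖ ^ 2) ∧
      ∑' i : ι, ‖∫ x, f x * (starRingEnd ℂ) (g i x) ∂μ‖ ^ 2
        ≤ B * ∫ x, ‖f x‖ ^ 2 ∂μ := by
  classical
  set M : G → ℝ := fun x => ⨆ q ∈ Q, Φ ((x * q)⁻¹) with hMdef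
  have hQinv : ∀ q ∈ Q, q⁻¹ ∈ Q := by
    intro q hq
    rw [← hQsymm]
    exact Set.inv_mem_inv.mpr hq
  -- the sup `M` dominates each value
  have hMbdd : ∀ z : G, ∀ q ∈ Q, Φ ((z * q)⁻¹) ≤ M z := by
    intro z q hq
    have hcont : Continuous fun q : G => Φ ((z * q)⁻¹) :=
      hΦc.comp ((continuous_const.mul continuous_id).inv)
    obtain ⟨c, hc⟩ := (hQcomp.image hcont).bddAbove
    have hb : ∀ q' : G, (⨆ _ : q' ∈ Q, Φ ((z * q')⁻¹)) ≤ max c 0 := by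
      intro q'
      by_cases hq' : q' ∈ Q
      · rw [ciSup_pos hq']
        exact le_max_of_le_left (hc (Set.mem_image_of_mem _ (subset_closure hq')))
      · haveI : IsEmpty (q' ∈ Q) := ⟨hq'⟩
        rw [Real.iSup_of_isEmpty]
        exact le_max_right _ _
    calc Φ ((z * q)⁻¹) = ⨆ _ : q ∈ Q, Φ ((z * q)⁻¹) := (ciSup_pos (f := fun _ => Φ ((z * q)⁻¹)) hq).symm
      _ ≤ M z := le_ciSup ⟨max c 0, Set.forall_mem_range.2 hb⟩ q
  have hMz : ∀ z : G, Φ z⁻¹ ≤ M z := fun z => by simpa using hMbdd z 1 hQone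
  set C₂ : ℝ≥0∞ := ∫⁻ z, ENNReal.ofReal (M z) ∂μ with hC2def
  have hC₂top : C₂ ≠ ∞ := by
    have h := hΦv.hasFiniteIntegral
    rw [HasFiniteIntegral] at h
    refine (lt_of_le_of_lt (lintegral_mono fun z => ?_) h).ne
    rw [← ofReal_norm]
    exact ENNReal.ofReal_le_ofReal (le_abs_self _)
  have hμQ0 : μ Q ≠ 0 := (hQopen.measure_pos μ ⟨1, hQone⟩).ne'
  have hμQtop : μ Q ≠ ∞ := ((measure_mono subset_closure).trans_lt hQcomp.measure_lt_top).ne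
  -- bound for the second factor
  have hB : ∀ i, ∫⁻ x, ENNReal.ofReal (Φ (x⁻¹ * Λ i)) ∂μ ≤ C₂ := by
    intro i
    calc ∫⁻ x, ENNReal.ofReal (Φ (x⁻¹ * Λ i)) ∂μ
        = ∫⁻ x, ENNReal.ofReal (Φ ((Λ i)⁻¹ * x)⁻¹) ∂μ := by
          simp_rw [mul_inv_rev, inv_inv]
      _ = ∫⁻ x, ENNReal.ofReal (Φ x⁻¹) ∂μ :=
          lintegral_mul_left_eq_self (fun x => ENNReal.ofReal (Φ x⁻¹)) (Λ i)⁻¹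
      _ ≤ C₂ := lintegral_mono fun z => ENNReal.ofReal_le_ofReal (hMz z)
  -- the key counting estimate
  have key : ∀ (s : Finset ι) (x : G),
      (∑ i ∈ s, ENNReal.ofReal (Φ ((Λ i)⁻¹ * x))) * μ Q ≤ (N : ℝ≥0∞) * C₂ := by
    intro s x
    have hSmeas : ∀ i : ι, MeasurableSet ((x⁻¹ * Λ i) • Q) := fun i =>
      (hQopen.smul _).measurableSet
    have step1 : ∀ i : ι, ENNReal.ofReal (Φ ((Λ i)⁻¹ * x)) * μ Q
        = ∫⁻ z, Set.indicator ((x⁻¹ * Λ i) • Q)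
            (fun _ => ENNReal.ofReal (Φ ((Λ i)⁻¹ * x))) z ∂μ := by
      intro i
      rw [lintegral_indicator_const (hSmeas i), measure_smul]
    rw [Finset.sum_mul]
    simp_rw [step1]
    rw [← lintegral_finset_sum _ (fun i _ => measurable_const.indicator (hSmeas i))]
    have hpt : ∀ z : G,
        (∑ i ∈ s, Set.indicator ((x⁻¹ * Λ i) • Q)
          (fun _ => ENNReal.ofReal (Φ ((Λ i)⁻¹ * x))) z)
        ≤ (N : ℝ≥0∞) * ENNReal.ofReal (M z) := by
      intro z
      have hterm : ∀ i ∈ s, Set.indicator ((x⁻¹ * Λ i) • Q)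
          (fun _ => ENNReal.ofReal (Φ ((Λ i)⁻¹ * x))) z
          ≤ Set.indicator ((x⁻¹ * Λ i) • Q) (fun _ => (1 : ℝ≥0∞)) z
              * ENNReal.ofReal (M z) := by
        intro i _
        by_cases hz : z ∈ (x⁻¹ * Λ i) • Q
        · rw [Set.indicator_of_mem hz, Set.indicator_of_mem hz, one_mul]
          obtain ⟨q, hq, hzq⟩ := hz
          apply ENNReal.ofReal_le_ofReal
          have hzx : (Λ i)⁻¹ * x = (z * q⁻¹)⁻¹ := by
            rw [← hzq]; simp only [smul_eq_mul]; group
          rw [hzx]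
          exact hMbdd z q⁻¹ (hQinv q hq)
        · rw [Set.indicator_of_notMem hz, Set.indicator_of_notMem hz, zero_mul]
      have hcard : (∑ i ∈ s, Set.indicator ((x⁻¹ * Λ i) • Q) (fun _ => (1 : ℝ≥0∞)) z)
          ≤ (N : ℝ≥0∞) := by
        have hsub : (↑(s.filter fun i => z ∈ (x⁻¹ * Λ i) • Q) : Set ι)
            ⊆ {i : ι | Λ i ∈ (x * z) • Q} := by
          intro i hi
          simp only [Finset.coe_filter, Set.mem_setOf_eq] at hi
          obtain ⟨q, hq, hzq⟩ := hi.2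
          refine ⟨q⁻¹, hQinv q hq, ?_⟩
          simp only [smul_eq_mul] at hzq ⊢
          rw [← hzq]; group
        have hle := Set.ncard_le_ncard hsub (hsep (x * z)).1
        rw [Set.ncard_coe_finset] at hle
        have hle2 : (s.filter fun i => z ∈ (x⁻¹ * Λ i) • Q).card ≤ N :=
          hle.trans (hsep (x * z)).2
        calc (∑ i ∈ s, Set.indicator ((x⁻¹ * Λ i) • Q) (fun _ => (1 : ℝ≥0∞)) z)
            = ((s.filter fun i => z ∈ (x⁻¹ * Λ i) • Q).card : ℝ≥0∞) := by
              simp only [Set.indicator_apply]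
              rw [Finset.sum_boole]
          _ ≤ (N : ℝ≥0∞) := by exact_mod_cast hle2
      calc (∑ i ∈ s, Set.indicator ((x⁻¹ * Λ i) • Q)
            (fun _ => ENNReal.ofReal (Φ ((Λ i)⁻¹ * x))) z)
          ≤ ∑ i ∈ s, Set.indicator ((x⁻¹ * Λ i) • Q) (fun _ => (1 : ℝ≥0∞)) z
              * ENNReal.ofReal (M z) := Finset.sum_le_sum hterm
        _ = (∑ i ∈ s, Set.indicator ((x⁻¹ * Λ i) • Q) (fun _ => (1 : ℝ≥0∞)) z)
              * ENNReal.ofReal (M z) := (Finset.sum_mul _ _ _).symm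
        _ ≤ (N : ℝ≥0∞) * ENNReal.ofReal (M z) :=
            mul_le_mul_left hcard _
    calc ∫⁻ z, (∑ i ∈ s, Set.indicator ((x⁻¹ * Λ i) • Q)
          (fun _ => ENNReal.ofReal (Φ ((Λ i)⁻¹ * x))) z) ∂μ
        ≤ ∫⁻ z, (N : ℝ≥0∞) * ENNReal.ofReal (M z) ∂μ := lintegral_mono hpt
      _ = (N : ℝ≥0∞) * C₂ := lintegral_const_mul' _ _ (by simp)
  set K : ℝ≥0∞ := (N : ℝ≥0∞) * C₂ / μ Q with hKdef
  have hKtop : K ≠ ∞ :=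
    (ENNReal.div_lt_top (ENNReal.mul_ne_top (ENNReal.natCast_ne_top N) hC₂top) hμQ0).ne
  have keyK : ∀ (s : Finset ι) (x : G),
      (∑ i ∈ s, ENNReal.ofReal (Φ ((Λ i)⁻¹ * x))) ≤ K := by
    intro s x
    exact (ENNReal.le_div_iff_mul_le (Or.inl hμQ0) (Or.inl hμQtop)).2 (key s x)
  refine ⟨(C₂ * K).toReal + 1, by positivity, fun f hf => ?_⟩
  have hfm := hf.aestronglyMeasurable
  set L : ℝ≥0∞ := ∫⁻ x, (‖f x‖₊ : ℝ≥0∞) ^ 2 ∂μ with hLdef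
  have hfnorm2 : Integrable (fun x => ‖f x‖ ^ 2) μ := by
    have h := hf.integrable_norm_rpow (by norm_num) (by norm_num)
    simpa [ENNReal.toReal_ofNat, Real.rpow_natCast] using h
  have hLeq : ∀ x : G, ENNReal.ofReal (‖f x‖ ^ 2) = (‖f x‖₊ : ℝ≥0∞) ^ 2 := by
    intro x
    rw [ENNReal.ofReal_pow (norm_nonneg _), ofReal_norm, enorm_eq_nnnorm]
  have hLtop : L ≠ ∞ := by
    have h := hfnorm2.hasFiniteIntegral
    rw [HasFiniteIntegral] at h
    refine (lt_of_le_of_lt (le_of_eq ?_) h).ne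
    refine lintegral_congr fun x => ?_
    rw [← hLeq x, ← ofReal_norm]
    congr 1
    rw [Real.norm_eq_abs, abs_of_nonneg (by positivity)]
  have hL : ∫ x, ‖f x‖ ^ 2 ∂μ = L.toReal := by
    rw [integral_eq_lintegral_of_nonneg_ae (Filter.Eventually.of_forall fun x => by positivity)
      hfnorm2.aestronglyMeasurable]
    congr 1
    exact lintegral_congr fun x => hLeq x
  set a : ι → ℝ≥0∞ := fun i => ∫⁻ x, (‖f x‖₊ : ℝ≥0∞) * (‖g i x‖₊ : ℝ≥0∞) ∂μ with hadef
  have hnorm_le : ∀ i, ENNReal.ofReal (‖∫ x, f x * (starRingEnd ℂ) (g i x) ∂μ‖ ^ 2)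
      ≤ a i ^ 2 := by
    intro i
    have h1 : (‖∫ x, f x * (starRingEnd ℂ) (g i x) ∂μ‖₊ : ℝ≥0∞) ≤ a i := by
      refine (enorm_integral_le_lintegral_enorm _).trans (le_of_eq ?_)
      refine lintegral_congr fun x => ?_
      rw [enorm_eq_nnnorm, nnnorm_mul, ENNReal.coe_mul]
      congr 2
      simp
    calc ENNReal.ofReal (‖∫ x, f x * (starRingEnd ℂ) (g i x) ∂μ‖ ^ 2)
        = (‖∫ x, f x * (starRingEnd ℂ) (g i x) ∂μ‖₊ : ℝ≥0∞) ^ 2 := by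
          rw [ENNReal.ofReal_pow (norm_nonneg _), ofReal_norm, enorm_eq_nnnorm]
      _ ≤ a i ^ 2 := by gcongr
  -- Cauchy-Schwarz for each i
  have hCS : ∀ i, a i ^ 2
      ≤ (∫⁻ x, (‖f x‖₊ : ℝ≥0∞) ^ 2 * ENNReal.ofReal (Φ ((Λ i)⁻¹ * x)) ∂μ) * C₂ := by
    intro i
    set A : G → ℝ≥0∞ := fun x => ENNReal.ofReal (Φ ((Λ i)⁻¹ * x)) with hAdef
    set Bf : G → ℝ≥0∞ := fun x => ENNReal.ofReal (Φ (x⁻¹ * Λ i)) with hBfdef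
    have hA : Measurable A :=
      ENNReal.measurable_ofReal.comp (hΦc.comp (continuous_const.mul continuous_id)).measurable
    have hBm : Measurable Bf :=
      ENNReal.measurable_ofReal.comp (hΦc.comp (continuous_id.inv.mul continuous_const)).measurable
    have hg' : ∀ x, (‖g i x‖₊ : ℝ≥0∞) ≤ A x ^ (1/2 : ℝ) * Bf x ^ (1/2 : ℝ) := by
      intro x
      have h1 : (‖g i x‖₊ : ℝ≥0∞) ≤ A x := by
        rw [← enorm_eq_nnnorm, ← ofReal_norm]
        exact ENNReal.ofReal_le_ofReal ((henv i x).trans (min_le_left _ _))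
      have h2 : (‖g i x‖₊ : ℝ≥0∞) ≤ Bf x := by
        rw [← enorm_eq_nnnorm, ← ofReal_norm]
        exact ENNReal.ofReal_le_ofReal ((henv i x).trans (min_le_right _ _))
      calc (‖g i x‖₊ : ℝ≥0∞)
          = (‖g i x‖₊ : ℝ≥0∞) ^ (1/2 : ℝ) * (‖g i x‖₊ : ℝ≥0∞) ^ (1/2 : ℝ) := by
            rw [← ENNReal.rpow_add_of_nonneg _ _ (by norm_num) (by norm_num)]
            norm_num
        _ ≤ A x ^ (1/2 : ℝ) * Bf x ^ (1/2 : ℝ) := by gcongr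
    have hmain : a i ≤ (∫⁻ x, (‖f x‖₊ : ℝ≥0∞) ^ 2 * A x ∂μ) ^ (1/2 : ℝ)
        * (∫⁻ x, Bf x ∂μ) ^ (1/2 : ℝ) := by
      have hu : AEMeasurable (fun x => (‖f x‖₊ : ℝ≥0∞) * A x ^ (1/2 : ℝ)) μ :=
        hfm.enorm.mul (hA.pow_const _).aemeasurable
      have hv : AEMeasurable (fun x => Bf x ^ (1/2 : ℝ)) μ :=
        (hBm.pow_const _).aemeasurable
      have hpq : Real.HolderConjugate 2 2 := Real.HolderConjugate.two_two
      have hH := ENNReal.lintegral_mul_le_Lp_mul_Lq μ hpq hu hv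
      have hexp1 : ∀ x : G, ((‖f x‖₊ : ℝ≥0∞) * A x ^ (1/2 : ℝ)) ^ (2 : ℝ)
          = (‖f x‖₊ : ℝ≥0∞) ^ 2 * A x := by
        intro x
        rw [ENNReal.mul_rpow_of_nonneg _ _ (by norm_num : (0:ℝ) ≤ 2),
          ← ENNReal.rpow_natCast (‖f x‖₊ : ℝ≥0∞) 2, ← ENNReal.rpow_mul]
        norm_num
      have hexp2 : ∀ x : G, (Bf x ^ (1/2 : ℝ)) ^ (2 : ℝ) = Bf x := by
        intro x
        rw [← ENNReal.rpow_mul]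
        norm_num
      calc a i ≤ ∫⁻ x, ((‖f x‖₊ : ℝ≥0∞) * A x ^ (1/2 : ℝ)) * Bf x ^ (1/2 : ℝ) ∂μ := by
            refine lintegral_mono fun x => ?_
            rw [mul_assoc]
            exact mul_le_mul_right (hg' x) _
        _ ≤ (∫⁻ x, ((‖f x‖₊ : ℝ≥0∞) * A x ^ (1/2 : ℝ)) ^ (2:ℝ) ∂μ) ^ (1/2 : ℝ)
            * (∫⁻ x, (Bf x ^ (1/2 : ℝ)) ^ (2:ℝ) ∂μ) ^ (1/2 : ℝ) := hH
        _ = (∫⁻ x, (‖f x‖₊ : ℝ≥0∞) ^ 2 * A x ∂μ) ^ (1/2 : ℝ)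
            * (∫⁻ x, Bf x ∂μ) ^ (1/2 : ℝ) := by
            rw [lintegral_congr hexp1, lintegral_congr hexp2]
    have hsq : ∀ y : ℝ≥0∞, (y ^ (1/2 : ℝ)) ^ 2 = y := by
      intro y
      rw [← ENNReal.rpow_natCast (y ^ (1/2 : ℝ)) 2, ← ENNReal.rpow_mul]
      norm_num
    calc a i ^ 2 ≤ ((∫⁻ x, (‖f x‖₊ : ℝ≥0∞) ^ 2 * A x ∂μ) ^ (1/2 : ℝ)
          * (∫⁻ x, Bf x ∂μ) ^ (1/2 : ℝ)) ^ 2 := by gcongr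
      _ = (∫⁻ x, (‖f x‖₊ : ℝ≥0∞) ^ 2 * A x ∂μ) * (∫⁻ x, Bf x ∂μ) := by
          rw [mul_pow, hsq, hsq]
      _ ≤ (∫⁻ x, (‖f x‖₊ : ℝ≥0∞) ^ 2 * A x ∂μ) * C₂ := mul_le_mul_right (hB i) _
  -- summing over finite sets
  have hsum : ∀ s : Finset ι, ∑ i ∈ s, a i ^ 2 ≤ C₂ * K * L := by
    intro s
    have hAmeas : ∀ i : ι, AEMeasurable
        (fun x => (‖f x‖₊ : ℝ≥0∞) ^ 2 * ENNReal.ofReal (Φ ((Λ i)⁻¹ * x))) μ := fun i =>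
      (hfm.enorm.pow_const 2).mul
        (ENNReal.measurable_ofReal.comp
          (hΦc.comp (continuous_const.mul continuous_id)).measurable).aemeasurable
    calc ∑ i ∈ s, a i ^ 2
        ≤ ∑ i ∈ s, (∫⁻ x, (‖f x‖₊ : ℝ≥0∞) ^ 2 * ENNReal.ofReal (Φ ((Λ i)⁻¹ * x)) ∂μ) * C₂ :=
          Finset.sum_le_sum fun i _ => hCS i
      _ = (∑ i ∈ s, ∫⁻ x, (‖f x‖₊ : ℝ≥0∞) ^ 2 * ENNReal.ofReal (Φ ((Λ i)⁻¹ * x)) ∂μ) * C₂ :=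
          (Finset.sum_mul _ _ _).symm
      _ = (∫⁻ x, ∑ i ∈ s, (‖f x‖₊ : ℝ≥0∞) ^ 2 * ENNReal.ofReal (Φ ((Λ i)⁻¹ * x)) ∂μ) * C₂ := by
          rw [lintegral_finset_sum' _ (fun i _ => hAmeas i)]
      _ ≤ (∫⁻ x, (‖f x‖₊ : ℝ≥0∞) ^ 2 * K ∂μ) * C₂ := by
          refine mul_le_mul_left (lintegral_mono fun x => ?_) _
          rw [← Finset.mul_sum]
          exact mul_le_mul_right (keyK s x) _
      _ = C₂ * K * L := by
          rw [lintegral_mul_const' K _ hKtop]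
          ring
  have htsum : ∑' i, ENNReal.ofReal (‖∫ x, f x * (starRingEnd ℂ) (g i x) ∂μ‖ ^ 2)
      ≤ C₂ * K * L := by
    rw [ENNReal.tsum_eq_iSup_sum]
    exact iSup_le fun s => le_trans (Finset.sum_le_sum fun i _ => hnorm_le i) (hsum s)
  have hfin : ∑' i, ENNReal.ofReal (‖∫ x, f x * (starRingEnd ℂ) (g i x) ∂μ‖ ^ 2) ≠ ∞ :=
    (htsum.trans_lt (ENNReal.mul_ne_top (ENNReal.mul_ne_top hC₂top hKtop) hLtop).lt_top).ne
  have hsummable : Summable (fun i => ‖∫ x, f x * (starRingEnd ℂ) (g i x) ∂μ‖ ^ 2) := by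
    refine Summable.congr (ENNReal.summable_toReal hfin) fun i => ?_
    exact ENNReal.toReal_ofReal (by positivity)
  refine ⟨hsummable, ?_⟩
  have h1 : ∑' i, ‖∫ x, f x * (starRingEnd ℂ) (g i x) ∂μ‖ ^ 2
      = (∑' i, ENNReal.ofReal (‖∫ x, f x * (starRingEnd ℂ) (g i x) ∂μ‖ ^ 2)).toReal := by
    rw [ENNReal.tsum_toReal_eq (fun i => ENNReal.ofReal_ne_top)]
    exact tsum_congr fun i => (ENNReal.toReal_ofReal (by positivity)).symm
  rw [h1, hL]
  calc (∑' i, ENNReal.ofReal (‖∫ x, f x * (starRingEnd ℂ) (g i x) ∂μ‖ ^ 2)).toReal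
      ≤ (C₂ * K * L).toReal :=
        ENNReal.toReal_mono (ENNReal.mul_ne_top (ENNReal.mul_ne_top hC₂top hKtop) hLtop) htsum
    _ = (C₂ * K).toReal * L.toReal := by rw [ENNReal.toReal_mul]
    _ ≤ ((C₂ * K).toReal + 1) * L.toReal := by
        have : (0:ℝ) ≤ L.toReal := ENNReal.toReal_nonneg
        nlinarith
end

section
/- Let G be a σ-compact locally compact group with Haar measure μ_G and let K ⊂ L²(G) be a reproducing kernel Hilbert space with kernel k satisfying |k(x,y)| ≤ Θ(y⁻¹x) for a nonnegative Θ ∈ L²(G) with Θ(x) = Θ(x⁻¹). Suppose α := inf_{x∈G} k(x,x) > 0 and ε ∈ (0,1), and let K ⊆ G be a measurable set such that ∫_{G∖K} Θ(z)² dμ_G(z) ≤ α ε²/4. Then for every λ ∈ G, the normalized kernel k̃_λ := k_λ/‖k_λ‖_{L²} satisfies 1 − ε/2 ≤ ‖k̃_λ · 1_{λK}‖_{L²} ≤ 1 + ε/2. -/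
open MeasureTheory Measure
open scoped Pointwise ENNReal

/-- Step 1 of Lemma 6.1: for a reproducing kernel with symmetric `L²` envelope
`Θ`, lower diagonal bound `α`, and a set `K` capturing most of the mass of `Θ²`,
the truncated normalized kernels satisfy
`1 − ε/2 ≤ ‖k̃_λ · 1_{λK}‖_{L²} ≤ 1 + ε/2` for every `λ ∈ G`. -/
theorem truncated_normalized_kernel_bounds
    {G : Type*} [Group G] [TopologicalSpace G] [IsTopologicalGroup G]
    [LocallyCompactSpace G] [SigmaCompactSpace G]
    [MeasurableSpace G] [BorelSpace G]
    (μ : Measure G) [μ.IsHaarMeasure]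
    -- a reproducing kernel: k_x := k(·,x) ∈ L², and k(x,y) = ⟨k_y, k_x⟩_{L²}
    (k : G → G → ℂ)
    (hkm : ∀ x : G, Measurable fun z => k z x)
    (hkL2 : ∀ x : G, MemLp (fun z => k z x) 2 μ)
    (hrep : ∀ x y : G, k x y = ∫ z, k z y * (starRingEnd ℂ) (k z x) ∂μ)
    -- symmetric L² envelope
    (Θ : G → ℝ) (hΘm : Measurable Θ) (hΘ0 : ∀ x, 0 ≤ Θ x)
    (hΘsym : ∀ x : G, Θ x⁻¹ = Θ x)
    (hΘ2 : Integrable (fun x => Θ x ^ 2) μ)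
    (hloc : ∀ x y : G, ‖k x y‖ ≤ Θ (y⁻¹ * x))
    -- lower diagonal bound
    (α : ℝ) (hα0 : 0 < α) (hα : ∀ x : G, α ≤ (k x x).re)
    -- ε and the truncation set K
    (ε : ℝ) (hε : ε ∈ Set.Ioo (0 : ℝ) 1)
    (K : Set G) (hK : MeasurableSet K)
    (hKtail : ∫ z in Kᶜ, Θ z ^ 2 ∂μ ≤ α * ε ^ 2 / 4) :
    ∀ l : G,
      1 - ε / 2 ≤
          Real.sqrt (∫ x in l • K, ‖k x l‖ ^ 2 ∂μ) /
            Real.sqrt (∫ x, ‖k x l‖ ^ 2 ∂μ) ∧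
      Real.sqrt (∫ x in l • K, ‖k x l‖ ^ 2 ∂μ) /
          Real.sqrt (∫ x, ‖k x l‖ ^ 2 ∂μ) ≤ 1 + ε / 2 := by
  obtain ⟨hε0, hε1⟩ := hε
  intro l
  set f : G → ℝ := fun x => ‖k x l‖ ^ 2 with hf
  have hfint : Integrable f μ := by
    have h := (hkL2 l).integrable_norm_rpow (by norm_num) (by norm_num)
    have h2 : ((2 : ℝ≥0∞)).toReal = (2 : ℝ) := by norm_num
    simpa [hf, h2, Real.rpow_two] using h
  have hN : (∫ x, f x ∂μ) = (k l l).re := by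
    have h := hrep l l
    have hfun : (fun z => k z l * (starRingEnd ℂ) (k z l)) = fun z => ((f z : ℝ) : ℂ) := by
      funext z
      simp [hf, Complex.mul_conj, Complex.normSq_eq_norm_sq,
        Complex.ofReal_pow]
    rw [hfun] at h
    have h2 : (∫ z, ((f z : ℝ) : ℂ) ∂μ) = ((∫ z, f z ∂μ : ℝ) : ℂ) := integral_ofReal
    rw [h2] at h
    rw [h, Complex.ofReal_re]
  have hset : MeasurableSet (l • K) := by
    have hEq : l • K = (fun x => l⁻¹ * x) ⁻¹' K := by
      ext x
      simp [Set.mem_smul_set_iff_inv_smul_mem, smul_eq_mul]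
    rw [hEq]
    exact (measurable_const_mul l⁻¹) hK
  have hg : Integrable (fun x => Θ (l⁻¹ * x) ^ 2) μ := by
    have := ((measurePreserving_mul_left μ l⁻¹).integrable_comp_emb
      (MeasurableEquiv.mulLeft l⁻¹).measurableEmbedding).mpr hΘ2
    simpa [Function.comp_def] using this
  have htail : ∫ x in (l • K)ᶜ, f x ∂μ ≤ α * ε ^ 2 / 4 := by
    have h1 : ∫ x in (l • K)ᶜ, f x ∂μ ≤ ∫ x in (l • K)ᶜ, Θ (l⁻¹ * x) ^ 2 ∂μ := by
      apply setIntegral_mono_on hfint.integrableOn hg.integrableOn hset.compl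
      intro x _
      have h := hloc x l
      have h0 : (0 : ℝ) ≤ ‖k x l‖ := norm_nonneg _
      have h1 := hΘ0 (l⁻¹ * x)
      simp only [hf]
      nlinarith
    have h2 : ∫ x in (l • K)ᶜ, Θ (l⁻¹ * x) ^ 2 ∂μ = ∫ z in Kᶜ, Θ z ^ 2 ∂μ := by
      have hemb : MeasurableEmbedding (fun z : G => l * z) := (MeasurableEquiv.mulLeft l).measurableEmbedding
      have hpre : (fun z : G => l * z) ⁻¹' (l • K)ᶜ = Kᶜ := by
        ext z
        simp [Set.mem_smul_set_iff_inv_smul_mem, smul_eq_mul]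
      calc ∫ x in (l • K)ᶜ, Θ (l⁻¹ * x) ^ 2 ∂μ
          = ∫ z in (fun z : G => l * z) ⁻¹' (l • K)ᶜ, Θ (l⁻¹ * (l * z)) ^ 2 ∂μ :=
            ((measurePreserving_mul_left μ l).setIntegral_preimage_emb hemb
              (fun x => Θ (l⁻¹ * x) ^ 2) _).symm
        _ = ∫ z in Kᶜ, Θ z ^ 2 ∂μ := by rw [hpre]; simp
    linarith
  set N := ∫ x, f x ∂μ with hNdef
  set A := ∫ x in l • K, f x ∂μ with hAdef
  have hsplit : A + ∫ x in (l • K)ᶜ, f x ∂μ = N := integral_add_compl hset hfint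
  have hA0 : 0 ≤ A := setIntegral_nonneg hset (fun x _ => by positivity)
  have htail0 : 0 ≤ ∫ x in (l • K)ᶜ, f x ∂μ :=
    setIntegral_nonneg hset.compl (fun x _ => by positivity)
  have hAN : A ≤ N := by linarith
  have hNα : α ≤ N := by rw [hN]; exact hα l
  have hNpos : 0 < N := lt_of_lt_of_le hα0 hNα
  have hlow : (1 - ε / 2) ^ 2 * N ≤ A := by
    nlinarith [mul_le_mul_of_nonneg_right hNα (sq_nonneg ε), mul_pos hNpos hε0,
      mul_nonneg (mul_nonneg hNpos.le hε0.le) (by linarith : (0:ℝ) ≤ 2 - ε)]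
  have hsqrtN : 0 < Real.sqrt N := Real.sqrt_pos.mpr hNpos
  constructor
  · rw [le_div_iff₀ hsqrtN]
    have heq : (1 - ε / 2) * Real.sqrt N = Real.sqrt ((1 - ε / 2) ^ 2 * N) := by
      rw [Real.sqrt_mul (sq_nonneg _), Real.sqrt_sq (by linarith)]
    rw [heq]
    exact Real.sqrt_le_sqrt hlow
  · have h1 : Real.sqrt A / Real.sqrt N ≤ 1 := by
      rw [div_le_one hsqrtN]
      exact Real.sqrt_le_sqrt hAN
    linarith
end
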